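/- arXiv:1009.4886 — 3 statements merged into one kernel-verified Lean document; each statement's English description precedes it below -/
import Mathlib

section
/- Let X be a real-valued Lévy process, t ≥ 0, and p > 0. If E e^{pM_t} < ∞, then sup_{0<δ≤1} E e^{pM^δ_t} < ∞. -/
open MeasureTheory ProbabilityTheory Filter Asymptotics

noncomputable section

namespace LevyApprox

open scoped ENNReal NNReal

variable {Ω : Type*} [MeasurableSpace Ω]

/-- A càdlàg process started at `0` with stationary and independent increments,
i.e. a Lévy process. -/
structure IsLevyProcess (P : Measure Ω) (X : ℝ → Ω → ℝ) : Prop where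
  meas : ∀ t : ℝ, Measurable (X t)
  init : ∀ᵐ ω ∂P, X 0 ω = 0
  rightCont : ∀ᵐ ω ∂P, ∀ t : ℝ, 0 ≤ t →
    ContinuousWithinAt (fun s => X s ω) (Set.Ici t) t
  leftLim : ∀ᵐ ω ∂P, ∀ t : ℝ, 0 < t →
    ∃ l : ℝ, Tendsto (fun s => X s ω) (nhdsWithin t (Set.Iio t)) (nhds l)
  stationary : ∀ s t : ℝ, 0 ≤ s → s ≤ t →
    Measure.map (fun ω => X t ω - X s ω) P = Measure.map (fun ω => X (t - s) ω) P
  indepIncr : ∀ s t : ℝ, 0 ≤ s → s ≤ t →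
    IndepFun (fun ω => X t ω - X s ω) (fun ω => fun u : Set.Icc (0:ℝ) s => X (u : ℝ) ω) P

/-- `ν` is a Lévy measure on `ℝ`: no atom at `0` and `∫ min(x², 1) ν(dx) < ∞`. -/
structure IsLevyMeasure (ν : Measure ℝ) : Prop where
  noAtom : ν {0} = 0
  finiteMin : ∫⁻ x : ℝ, ENNReal.ofReal (min (x ^ 2) 1) ∂ν < ⊤

/-- The characteristic (Lévy) exponent of the generating triplet `(γ, b², ν)`. -/
def levyExponent (γ b : ℝ) (ν : Measure ℝ) (u : ℝ) : ℂ :=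
  ((γ * u : ℝ) : ℂ) * Complex.I - ((b ^ 2 * u ^ 2 / 2 : ℝ) : ℂ) +
    ∫ x : ℝ, (Complex.exp (Complex.I * ((u * x : ℝ) : ℂ)) - 1 -
      (if |x| ≤ 1 then ((u * x : ℝ) : ℂ) * Complex.I else 0)) ∂ν

/-- The characteristic exponent of `X^ε`, obtained from `X` by removing the
compensated jumps of absolute size at most `ε`. -/
def truncExponent (γ b : ℝ) (ν : Measure ℝ) (ε : ℝ) (u : ℝ) : ℂ :=
  ((γ * u : ℝ) : ℂ) * Complex.I - ((b ^ 2 * u ^ 2 / 2 : ℝ) : ℂ) +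
    ∫ x : ℝ in {x : ℝ | ε < |x|}, (Complex.exp (Complex.I * ((u * x : ℝ) : ℂ)) - 1 -
      (if |x| ≤ 1 then ((u * x : ℝ) : ℂ) * Complex.I else 0)) ∂ν

/-- The characteristic exponent of `R^ε = X - X^ε`, the compensated sum of
jumps of absolute size at most `ε`. -/
def smallExponent (ν : Measure ℝ) (ε : ℝ) (u : ℝ) : ℂ :=
  ∫ x : ℝ in {x : ℝ | |x| ≤ ε}, (Complex.exp (Complex.I * ((u * x : ℝ) : ℂ)) - 1 -
    ((u * x : ℝ) : ℂ) * Complex.I) ∂ν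

/-- The process `X` has characteristic exponent `ψ` under `P`:
`E[exp(i u X_t)] = exp(t ψ(u))` for all `t ≥ 0`. -/
def HasCharExponent (P : Measure Ω) (X : ℝ → Ω → ℝ) (ψ : ℝ → ℂ) : Prop :=
  ∀ t : ℝ, 0 ≤ t → ∀ u : ℝ,
    ∫ ω, Complex.exp (Complex.I * ((u * X t ω : ℝ) : ℂ)) ∂P = Complex.exp ((t : ℂ) * ψ u)

/-- `σ(ε) = (∫_{|x| ≤ ε} x² ν(dx))^{1/2}`. -/
def sigmaFn (ν : Measure ℝ) (ε : ℝ) : ℝ :=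
  Real.sqrt (∫ x : ℝ in {x : ℝ | |x| ≤ ε}, x ^ 2 ∂ν)

/-- `σ₀(ε) = max (σ(ε), ε)`. -/
def sigma0 (ν : Measure ℝ) (ε : ℝ) : ℝ := max (sigmaFn ν ε) ε

/-- The running supremum `M_t = sup_{0 ≤ s ≤ t} X_s`. -/
def runSup (X : ℝ → Ω → ℝ) (t : ℝ) (ω : Ω) : ℝ :=
  ⨆ s : Set.Icc (0:ℝ) t, X (s : ℝ) ω

/-- A standard Brownian motion: continuous paths started at `0`, Gaussian
stationary increments independent of the past. -/
structure IsStdBrownian (P : Measure Ω) (W : ℝ → Ω → ℝ) : Prop where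
  meas : ∀ t : ℝ, Measurable (W t)
  init : ∀ᵐ ω ∂P, W 0 ω = 0
  cont : ∀ᵐ ω ∂P, Continuous fun t => W t ω
  gauss : ∀ s t : ℝ, 0 ≤ s → s ≤ t →
    Measure.map (fun ω => W t ω - W s ω) P = gaussianReal 0 (Real.toNNReal (t - s))
  indepIncr : ∀ s t : ℝ, 0 ≤ s → s ≤ t →
    IndepFun (fun ω => W t ω - W s ω) (fun ω => fun u : Set.Icc (0:ℝ) s => W (u : ℝ) ω) P

/-- `β(ε) = σ₀(ε)⁻⁴ ∫_{|x| ≤ ε} x⁴ ν(dx)`. -/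
def betaFn (ν : Measure ℝ) (ε : ℝ) : ℝ :=
  (∫ x : ℝ in {x : ℝ | |x| ≤ ε}, x ^ 4 ∂ν) / sigma0 ν ε ^ 4

/-- `β₁ᵗ(ε) = β(ε)^{1/6} (√(log(t/β(ε)^{1/3} + 3)) + 1)`. -/
def beta1 (ν : Measure ℝ) (t ε : ℝ) : ℝ :=
  betaFn ν ε ^ ((1 : ℝ)/6) *
    (Real.sqrt (Real.log (t / betaFn ν ε ^ ((1 : ℝ)/3) + 3)) + 1)

/-- `β_{p,θ}ᵗ(ε) = β(ε)^{pθ/(p+4θ)} [(log(t/β(ε)^{pθ/(p+4θ)} + 3))^p + 1]`. -/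
def betaP (ν : Measure ℝ) (t p θ ε : ℝ) : ℝ :=
  betaFn ν ε ^ (p * θ / (p + 4 * θ)) *
    ((Real.log (t / betaFn ν ε ^ (p * θ / (p + 4 * θ)) + 3)) ^ p + 1)

/-- `ρ(ε) = σ(ε)⁻³ ∫_{|x| ≤ ε} |x|³ ν(dx)`. -/
def rhoFn (ν : Measure ℝ) (ε : ℝ) : ℝ :=
  (∫ x : ℝ in {x : ℝ | |x| ≤ ε}, |x| ^ 3 ∂ν) / sigmaFn ν ε ^ 3


lemma bddAbove_of_cadlag {f : ℝ → ℝ} {t : ℝ} (ht : 0 ≤ t)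
    (hr : ∀ s : ℝ, 0 ≤ s → ContinuousWithinAt f (Set.Ici s) s)
    (hl : ∀ s : ℝ, 0 < s → ∃ l : ℝ, Tendsto f (nhdsWithin s (Set.Iio s)) (nhds l)) :
    BddAbove (f '' Set.Icc 0 t) := by
  have key : ∀ s : ℝ, s ∈ Set.Icc 0 t → ∃ (U : Set ℝ) (C : ℝ), U ∈ nhds s ∧
      ∀ r ∈ U, 0 ≤ r → f r ≤ C := by
    intro s hs
    have h1 : ∀ᶠ r in nhdsWithin s (Set.Ici s), f r ≤ f s + 1 :=
      (hr s hs.1).eventually_le_const (lt_add_one (f s))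
    obtain ⟨U₁, hU₁o, hsU₁, hU₁⟩ := mem_nhdsWithin.mp h1
    rcases eq_or_lt_of_le hs.1 with hs0 | hs0
    · refine ⟨U₁, f s + 1, hU₁o.mem_nhds hsU₁, fun r hr1 hr0 => ?_⟩
      exact hU₁ ⟨hr1, by simpa [← hs0] using hr0⟩
    · obtain ⟨l, hl'⟩ := hl s hs0
      have h2 : ∀ᶠ r in nhdsWithin s (Set.Iio s), f r ≤ l + 1 :=
        hl'.eventually_le_const (lt_add_one l)
      obtain ⟨U₂, hU₂o, hsU₂, hU₂⟩ := mem_nhdsWithin.mp h2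
      refine ⟨U₁ ∩ U₂, max (f s + 1) (l + 1), (hU₁o.inter hU₂o).mem_nhds ⟨hsU₁, hsU₂⟩,
        fun r hr1 _ => ?_⟩
      rcases le_or_gt s r with hsr | hsr
      · exact le_trans (hU₁ ⟨hr1.1, hsr⟩) (le_max_left _ _)
      · exact le_trans (hU₂ ⟨hr1.2, hsr⟩) (le_max_right _ _)
  choose! U C h using key
  obtain ⟨F, hFs, hcov⟩ := isCompact_Icc.elim_nhds_subcover U (fun s hs => (h s hs).1)
  have hFne : F.Nonempty := by
    by_contra hne
    rw [Finset.not_nonempty_iff_eq_empty] at hne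
    have h0 : (0:ℝ) ∈ Set.Icc 0 t := ⟨le_refl 0, ht⟩
    have := hcov h0
    simp [hne] at this
  refine ⟨F.sup' hFne C, ?_⟩
  rintro y ⟨r, hrIcc, rfl⟩
  obtain ⟨s, hsF, hrU⟩ := Set.mem_iUnion₂.mp (hcov hrIcc)
  exact le_trans ((h s (hFs s hsF)).2 r hrU hrIcc.1) (Finset.le_sup' C hsF)


lemma norm_exp_I_aux (θ : ℝ) :
    ‖Complex.exp (Complex.I * (θ:ℂ)) - 1 - (θ:ℂ) * Complex.I‖ ≤ 3 * θ ^ 2 := by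
  have hz : Complex.I * (θ:ℂ) = (θ:ℂ) * Complex.I := by ring
  have habs : ‖(θ:ℂ) * Complex.I‖ = |θ| := by
    rw [norm_mul, Complex.norm_I, Complex.norm_real, Real.norm_eq_abs, mul_one]
  rw [hz]
  rcases le_or_gt (|θ|) 1 with h1 | h1
  · calc ‖Complex.exp ((θ:ℂ) * Complex.I) - 1 - (θ:ℂ) * Complex.I‖
        ≤ ‖(θ:ℂ) * Complex.I‖ ^ 2 :=
          Complex.norm_exp_sub_one_sub_id_le (by rw [habs]; exact h1)
      _ = θ ^ 2 := by rw [habs, sq_abs]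
      _ ≤ 3 * θ ^ 2 := by nlinarith [sq_nonneg θ]
  · have hexp : ‖Complex.exp ((θ:ℂ) * Complex.I)‖ = 1 := by
      rw [Complex.norm_exp]
      simp
    calc ‖Complex.exp ((θ:ℂ) * Complex.I) - 1 - (θ:ℂ) * Complex.I‖
        ≤ ‖Complex.exp ((θ:ℂ) * Complex.I) - 1‖ + ‖(θ:ℂ) * Complex.I‖ := by
          apply (norm_sub_le _ _)
      _ ≤ (‖Complex.exp ((θ:ℂ) * Complex.I)‖ + 1) + |θ| := by
          rw [habs]
          gcongr
          exact (norm_sub_le _ _).trans (by simp)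
      _ = 2 + |θ| := by rw [hexp]; ring
      _ ≤ 3 * θ ^ 2 := by nlinarith [sq_abs θ, abs_nonneg θ]

lemma measurableSet_abs_le (c : ℝ) : MeasurableSet {x : ℝ | |x| ≤ c} := by
  have : {x : ℝ | |x| ≤ c} = abs ⁻¹' Set.Iic c := rfl
  rw [this]
  exact measurable_abs measurableSet_Iic

lemma sq_integrableOn (ν : Measure ℝ) (hν : IsLevyMeasure ν) :
    IntegrableOn (fun x : ℝ => x ^ 2) {x : ℝ | |x| ≤ 1} ν := by
  constructor
  · exact (measurable_id.pow_const 2).aestronglyMeasurable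
  · rw [hasFiniteIntegral_iff_norm]
    calc ∫⁻ x in {x : ℝ | |x| ≤ 1}, ENNReal.ofReal ‖x ^ 2‖ ∂ν
        = ∫⁻ x in {x : ℝ | |x| ≤ 1}, ENNReal.ofReal (min (x ^ 2) 1) ∂ν := by
          refine setLIntegral_congr_fun (measurableSet_abs_le 1) ?_
          intro x hx
          have hx2 : x ^ 2 ≤ 1 := by
            have h' : |x| ≤ 1 := hx
            have := abs_le.mp h'
            nlinarith
          show ENNReal.ofReal ‖x ^ 2‖ = ENNReal.ofReal (min (x ^ 2) 1)
          rw [Real.norm_eq_abs, abs_of_nonneg (sq_nonneg x), min_eq_left hx2]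
      _ ≤ ∫⁻ x, ENNReal.ofReal (min (x ^ 2) 1) ∂ν := setLIntegral_le_lintegral _ _
      _ < ⊤ := hν.finiteMin

lemma smallExponent_norm_le (ν : Measure ℝ) (hν : IsLevyMeasure ν) {δ : ℝ}
    (hδ : δ ∈ Set.Ioc (0:ℝ) 1) (u : ℝ) :
    ‖smallExponent ν δ u‖ ≤ 3 * (∫ x in {x : ℝ | |x| ≤ 1}, x ^ 2 ∂ν) * u ^ 2 := by
  set V := ∫ x in {x : ℝ | |x| ≤ 1}, x ^ 2 ∂ν with hV
  have hsub : {x : ℝ | |x| ≤ δ} ⊆ {x : ℝ | |x| ≤ 1} := fun x hx => le_trans hx hδ.2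
  have hVint := sq_integrableOn ν hν
  have hmeas : Measurable (fun x : ℝ => Complex.exp (Complex.I * ((u * x : ℝ) : ℂ)) - 1 -
      ((u * x : ℝ) : ℂ) * Complex.I) := by fun_prop
  have hptbd : ∀ x : ℝ, ‖Complex.exp (Complex.I * ((u * x : ℝ) : ℂ)) - 1 -
      ((u * x : ℝ) : ℂ) * Complex.I‖ ≤ 3 * u ^ 2 * x ^ 2 := by
    intro x
    have := norm_exp_I_aux (u * x)
    calc ‖Complex.exp (Complex.I * ((u * x : ℝ) : ℂ)) - 1 -
        ((u * x : ℝ) : ℂ) * Complex.I‖ ≤ 3 * (u * x) ^ 2 := this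
      _ = 3 * u ^ 2 * x ^ 2 := by ring
  have hmajint : IntegrableOn (fun x : ℝ => 3 * u ^ 2 * x ^ 2) {x : ℝ | |x| ≤ δ} ν :=
    (hVint.mono_set hsub).const_mul _
  have hInt : IntegrableOn (fun x : ℝ => Complex.exp (Complex.I * ((u * x : ℝ) : ℂ)) - 1 -
      ((u * x : ℝ) : ℂ) * Complex.I) {x : ℝ | |x| ≤ δ} ν := by
    refine Integrable.mono' hmajint hmeas.aestronglyMeasurable (ae_of_all _ fun x => hptbd x)
  calc ‖smallExponent ν δ u‖
      ≤ ∫ x in {x : ℝ | |x| ≤ δ}, ‖Complex.exp (Complex.I * ((u * x : ℝ) : ℂ)) - 1 -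
          ((u * x : ℝ) : ℂ) * Complex.I‖ ∂ν := norm_integral_le_integral_norm _
    _ ≤ ∫ x in {x : ℝ | |x| ≤ δ}, 3 * u ^ 2 * x ^ 2 ∂ν := by
        refine integral_mono_ae hInt.norm hmajint (ae_of_all _ fun x => hptbd x)
    _ = 3 * u ^ 2 * ∫ x in {x : ℝ | |x| ≤ δ}, x ^ 2 ∂ν := by
        rw [integral_const_mul]
    _ ≤ 3 * u ^ 2 * V := by
        have hle : (∫ x in {x : ℝ | |x| ≤ δ}, x ^ 2 ∂ν) ≤ V :=
          setIntegral_mono_set hVint (ae_of_all _ fun x => sq_nonneg x)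
            (HasSubset.Subset.eventuallyLE hsub)
        have h3 : (0:ℝ) ≤ 3 * u ^ 2 := by positivity
        exact mul_le_mul_of_nonneg_left hle h3
    _ = 3 * V * u ^ 2 := by ring

lemma concentration {Ω : Type*} [MeasurableSpace Ω] (P : Measure Ω) [IsProbabilityMeasure P]
    (ν : Measure ℝ) (hν : IsLevyMeasure ν) (t : ℝ) (ht : 0 ≤ t) :
    ∃ K : ℝ, 0 < K ∧ ∀ (Z : Ω → ℝ), Measurable Z → ∀ δ ∈ Set.Ioc (0:ℝ) 1, ∀ a ∈ Set.Icc 0 t,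
      (∀ u : ℝ, ∫ ω, Complex.exp (Complex.I * ((u * Z ω : ℝ) : ℂ)) ∂P
        = Complex.exp ((a : ℂ) * smallExponent ν δ u)) →
      P {ω | K ≤ |Z ω|} ≤ ENNReal.ofReal (1/2) := by
  set V := ∫ x in {x : ℝ | |x| ≤ 1}, x ^ 2 ∂ν with hVdef
  have hV0 : 0 ≤ V := setIntegral_nonneg (measurableSet_abs_le 1) (fun x _ => sq_nonneg x)
  set c : ℝ := 3 * V + 1 with hcdef
  have hc1 : 1 ≤ c := by simp [hcdef]; linarith
  have hc0 : 0 < c := lt_of_lt_of_le one_pos hc1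
  have htc : 0 ≤ t * c := mul_nonneg ht hc0.le
  set T : ℝ := Real.sqrt (3 / (8 * (t * c + 1))) with hTdef
  have hT0 : 0 < T := Real.sqrt_pos.mpr (by positivity)
  have hT2 : T ^ 2 = 3 / (8 * (t * c + 1)) := Real.sq_sqrt (by positivity)
  have htcT : t * c * T ^ 2 ≤ 3 / 8 := by
    rw [hT2]
    rw [mul_div_assoc', div_le_div_iff₀ (by positivity) (by norm_num)]
    nlinarith
  have htcT1 : t * c * T ^ 2 ≤ 1 := le_trans htcT (by norm_num)
  set K : ℝ := 2 / T with hKdef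
  have hK0 : 0 < K := by positivity
  refine ⟨K, hK0, ?_⟩
  intro Z hZ δ hδ a ha hchar
  -- step 1 : norm bound on the exponent
  have hsmall : ∀ u : ℝ, ‖(a:ℂ) * smallExponent ν δ u‖ ≤ t * c * u ^ 2 := by
    intro u
    rw [norm_mul, Complex.norm_real, Real.norm_eq_abs, abs_of_nonneg ha.1]
    have h1 := smallExponent_norm_le ν hν hδ u
    have h2 : ‖smallExponent ν δ u‖ ≤ c * u ^ 2 := by nlinarith [sq_nonneg u]
    calc a * ‖smallExponent ν δ u‖ ≤ t * (c * u ^ 2) := by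
          apply mul_le_mul ha.2 h2 (norm_nonneg _) ht
      _ = t * c * u ^ 2 := by ring
  -- step 2 : cosine formula
  have hcos : ∀ u : ℝ, (∫ ω, Real.cos (u * Z ω) ∂P)
      = (Complex.exp ((a:ℂ) * smallExponent ν δ u)).re := by
    intro u
    have hmeas : Measurable (fun ω => Complex.exp (Complex.I * ((u * Z ω : ℝ) : ℂ))) := by
      fun_prop
    have hint : Integrable (fun ω => Complex.exp (Complex.I * ((u * Z ω : ℝ) : ℂ))) P := by
      refine Integrable.mono' (integrable_const 1) hmeas.aestronglyMeasurable
        (ae_of_all _ fun ω => ?_)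
      rw [Complex.norm_exp]
      simp
    have h1 := integral_re hint
    rw [hchar u] at h1
    simp only [RCLike.re_to_complex] at h1
    rw [← h1]
    refine integral_congr_ae (ae_of_all _ fun ω => ?_)
    show Real.cos (u * Z ω) = RCLike.re (Complex.exp (Complex.I * ((u * Z ω : ℝ) : ℂ)))
    rw [mul_comm Complex.I, RCLike.re_to_complex, Complex.exp_ofReal_mul_I_re]
  -- step 3 : bound on 1 - E cos for |u| ≤ T
  have hcosbd : ∀ u : ℝ, |u| ≤ T → 1 - (∫ ω, Real.cos (u * Z ω) ∂P) ≤ 2 * (t * c * u ^ 2) := by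
    intro u hu
    rw [hcos u]
    set w : ℂ := (a:ℂ) * smallExponent ν δ u with hw
    have hwn : ‖w‖ ≤ t * c * u ^ 2 := hsmall u
    have hu2 : u ^ 2 ≤ T ^ 2 := by
      rw [← sq_abs u, ← sq_abs T]; exact pow_le_pow_left₀ (abs_nonneg u) (by rwa [abs_of_pos hT0]) 2
    have hw1 : ‖w‖ ≤ 1 := le_trans hwn (le_trans (by nlinarith) htcT1)
    have h2 : ‖Complex.exp w - 1‖ ≤ 2 * ‖w‖ :=
      Complex.norm_exp_sub_one_le hw1
    have h3 : 1 - (Complex.exp w).re ≤ ‖Complex.exp w - 1‖ := by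
      have h4 := Complex.abs_re_le_norm (Complex.exp w - 1)
      have h5 : (Complex.exp w - 1).re = (Complex.exp w).re - 1 := by simp
      rw [h5] at h4
      cases' abs_le.mp h4 with h4a h4b
      linarith
    have : ‖w‖ = ‖w‖ := rfl
    linarith [h3, h2, hwn, this ▸ hwn]
  -- Fubini / sinc argument
  set A : Set Ω := {ω | K ≤ |Z ω|} with hAdef
  have hAmeas : MeasurableSet A := measurableSet_le measurable_const hZ.abs
  set S : Ω → ℝ := fun ω => if Z ω = 0 then T else Real.sin (T * Z ω) / Z ω with hSdef
  have hSle : ∀ ω, |S ω| ≤ T := by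
    intro ω
    by_cases hz : Z ω = 0
    · simp [hSdef, hz, abs_of_pos hT0]
    · simp only [hSdef, hz, if_false]
      rw [abs_div, div_le_iff₀ (abs_pos.mpr hz)]
      calc |Real.sin (T * Z ω)| ≤ |T * Z ω| := Real.abs_sin_le_abs
        _ = T * |Z ω| := by rw [abs_mul, abs_of_pos hT0]
  have hSmeas : Measurable S :=
    Measurable.ite (hZ (measurableSet_singleton 0)) measurable_const
      (((measurable_const.mul hZ).sin).div hZ)
  have hh : ∀ ω, (∫ u in Set.Ioc (0:ℝ) T, (1 - Real.cos (u * Z ω))) = T - S ω := by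
    intro ω
    rw [← intervalIntegral.integral_of_le hT0.le]
    by_cases hz : Z ω = 0
    · simp [hSdef, hz]
    · have h2 : IntervalIntegrable (fun u => Real.cos (u * Z ω)) volume 0 T :=
        (Real.continuous_cos.comp (continuous_id.mul continuous_const)).intervalIntegrable 0 T
      rw [intervalIntegral.integral_sub intervalIntegrable_const h2,
        intervalIntegral.integral_const]
      rw [intervalIntegral.integral_comp_mul_right Real.cos hz, integral_cos]
      simp only [hSdef, hz, if_false, zero_mul, Real.sin_zero, smul_eq_mul, sub_zero,
        mul_one]
      rw [inv_mul_eq_div]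
  haveI hμT : IsFiniteMeasure (volume.restrict (Set.Ioc (0:ℝ) T)) := by
    constructor
    rw [Measure.restrict_apply_univ]
    rw [Real.volume_Ioc]
    exact ENNReal.ofReal_lt_top
  have hintcos : ∀ u : ℝ, Integrable (fun ω => Real.cos (u * Z ω)) P := by
    intro u
    refine Integrable.mono' (integrable_const 1) ?_ (ae_of_all _ fun ω => ?_)
    · exact ((measurable_const.mul hZ).cos).aestronglyMeasurable
    · rw [Real.norm_eq_abs]; exact Real.abs_cos_le_one _
  have hEcos : ∀ u : ℝ, (∫ ω, (1 - Real.cos (u * Z ω)) ∂P)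
      = 1 - ∫ ω, Real.cos (u * Z ω) ∂P := by
    intro u
    rw [integral_sub (integrable_const 1) (hintcos u), integral_const]
    simp
  have hFint' : Integrable (Function.uncurry fun ω u => 1 - Real.cos (u * Z ω))
      (P.prod (volume.restrict (Set.Ioc (0:ℝ) T))) := by
    refine Integrable.mono' (integrable_const 2) ?_ (ae_of_all _ fun q => ?_)
    · exact (measurable_const.sub ((measurable_snd.mul
        (hZ.comp measurable_fst)).cos)).aestronglyMeasurable
    · obtain ⟨x, y⟩ := q
      simp only [Function.uncurry_apply_pair]
      rw [Real.norm_eq_abs]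
      have h1 := Real.neg_one_le_cos (y * Z x)
      have h2 := Real.cos_le_one (y * Z x)
      rw [abs_le]
      constructor <;> linarith
  have hFint : Integrable (Function.uncurry fun u ω => 1 - Real.cos (u * Z ω))
      ((volume.restrict (Set.Ioc (0:ℝ) T)).prod P) := by
    refine Integrable.mono' (integrable_const 2) ?_ (ae_of_all _ fun q => ?_)
    · exact (measurable_const.sub ((measurable_fst.mul
        (hZ.comp measurable_snd)).cos)).aestronglyMeasurable
    · obtain ⟨x, y⟩ := q
      simp only [Function.uncurry_apply_pair]
      rw [Real.norm_eq_abs]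
      have h1 := Real.neg_one_le_cos (x * Z y)
      have h2 := Real.cos_le_one (x * Z y)
      rw [abs_le]
      constructor <;> linarith
  have hswap := MeasureTheory.integral_integral_swap
    (f := fun ω u => 1 - Real.cos (u * Z ω)) hFint'
  have hTSint : Integrable (fun ω => T - S ω) P := by
    refine (integrable_const T).sub ?_
    refine Integrable.mono' (integrable_const T) hSmeas.aestronglyMeasurable
      (ae_of_all _ fun ω => ?_)
    rw [Real.norm_eq_abs]; exact hSle ω
  have hTS0 : ∀ ω, 0 ≤ T - S ω := by
    intro ω
    have := hSle ω
    have := le_of_abs_le this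
    linarith
  have hbd : ∀ ω ∈ A, T / 2 ≤ T - S ω := by
    intro ω hω
    have hKZ : K ≤ |Z ω| := hω
    have hz : Z ω ≠ 0 := by
      intro h0
      rw [h0] at hKZ
      simp at hKZ
      linarith
    have hS2 : S ω ≤ T / 2 := by
      simp only [hSdef, hz, if_false]
      have h1 : Real.sin (T * Z ω) / Z ω ≤ |Real.sin (T * Z ω)| / |Z ω| := by
        rw [← abs_div]; exact le_abs_self _
      have h2 : |Real.sin (T * Z ω)| / |Z ω| ≤ 1 / |Z ω| := by
        gcongr
        exact Real.abs_sin_le_one _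
      have h3 : 1 / |Z ω| ≤ 1 / K := one_div_le_one_div_of_le hK0 hKZ
      have h4 : 1 / K = T / 2 := by rw [hKdef, one_div_div]
      linarith
    linarith
  have hlhs_int : IntegrableOn (fun u => ∫ ω, (1 - Real.cos (u * Z ω)) ∂P)
      (Set.Ioc (0:ℝ) T) volume := by
    have := hFint.integral_prod_left
    exact this
  have hrhs_int : IntegrableOn (fun u : ℝ => 2 * (t * c) * u ^ 2) (Set.Ioc (0:ℝ) T) volume := by
    exact (continuous_const.mul (continuous_pow 2)).integrableOn_Ioc
  have hptwise : ∀ u ∈ Set.Ioc (0:ℝ) T,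
      (∫ ω, (1 - Real.cos (u * Z ω)) ∂P) ≤ 2 * (t * c) * u ^ 2 := by
    intro u hu
    rw [hEcos u]
    have := hcosbd u (by rw [abs_of_pos hu.1]; exact hu.2)
    linarith
  have hval : (∫ u in Set.Ioc (0:ℝ) T, 2 * (t * c) * u ^ 2)
      = 2 * (t * c) * (T ^ 3 / 3) := by
    rw [← intervalIntegral.integral_of_le hT0.le]
    rw [intervalIntegral.integral_const_mul]
    rw [integral_pow 2]
    norm_num
  have hchain : (T / 2) * (P A).toReal ≤ 2 * (t * c) * (T ^ 3 / 3) := by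
    calc (T / 2) * (P A).toReal
        ≤ ∫ ω in A, (T - S ω) ∂P := by
          exact setIntegral_ge_of_const_le_real hAmeas (measure_ne_top P A) hbd
            hTSint.integrableOn
      _ ≤ ∫ ω, (T - S ω) ∂P := setIntegral_le_integral hTSint (ae_of_all _ hTS0)
      _ = ∫ ω, (∫ u in Set.Ioc (0:ℝ) T, (1 - Real.cos (u * Z ω))) ∂P :=
          integral_congr_ae (ae_of_all _ fun ω => (hh ω).symm)
      _ = ∫ u in Set.Ioc (0:ℝ) T, (∫ ω, (1 - Real.cos (u * Z ω)) ∂P) := hswap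
      _ ≤ ∫ u in Set.Ioc (0:ℝ) T, 2 * (t * c) * u ^ 2 :=
          setIntegral_mono_on hlhs_int hrhs_int measurableSet_Ioc hptwise
      _ = 2 * (t * c) * (T ^ 3 / 3) := hval
  have hq0 : 0 ≤ (P A).toReal := ENNReal.toReal_nonneg
  have hq : (P A).toReal ≤ 1 / 2 := by
    have h1 : 2 * (t * c) * (T ^ 3 / 3) = (2 / 3) * (t * c * T ^ 2) * T := by ring
    rw [h1] at hchain
    have h2 : (2 / 3 : ℝ) * (t * c * T ^ 2) * T ≤ (2 / 3) * (3 / 8) * T := by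
      have := mul_le_mul_of_nonneg_right (mul_le_mul_of_nonneg_left htcT (by norm_num :
        (0:ℝ) ≤ 2/3)) hT0.le
      linarith
    nlinarith
  rw [← ENNReal.ofReal_toReal (measure_ne_top P A)]
  exact ENNReal.ofReal_le_ofReal hq

lemma key_finset {Ω : Type*} [MeasurableSpace Ω] (P : Measure Ω) [IsProbabilityMeasure P]
    (X Y : ℝ → Ω → ℝ) (t p K : ℝ) (hp : 0 < p)
    (hYmeas : ∀ s, Measurable (Y s))
    (hindep : IndepFun (fun ω => fun s : ℝ => Y s ω) (fun ω => fun s : ℝ => X s ω - Y s ω) P)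
    (half : ℝ≥0∞)
    (hv : ∀ s ∈ Set.Icc (0:ℝ) t, half ≤ P {ω | -K ≤ X s ω - Y s ω})
    (hvmeas : ∀ s : ℝ, Measurable fun ω => X s ω - Y s ω)
    (hgoodX : ∀ᵐ ω ∂P, BddAbove ((fun s => X s ω) '' Set.Icc 0 t))
    (F : Finset ℝ) (hF : F.Nonempty) (hFsub : ↑F ⊆ Set.Icc (0:ℝ) t) :
    (∫⁻ ω, ENNReal.ofReal (Real.exp (p * F.sup' hF fun s => Y s ω)) ∂P) * half ≤
      ENNReal.ofReal (Real.exp (p * K)) *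
        ∫⁻ ω, ENNReal.ofReal (Real.exp (p * runSup X t ω)) ∂P := by
  classical
  set f : Ω → ℝ → ℝ := fun ω s => Y s ω with hfdef
  set g : Ω → ℝ → ℝ := fun ω s => X s ω - Y s ω with hgdef
  have hfmeas : Measurable f := measurable_pi_lambda _ (fun s => hYmeas s)
  have hgmeas : Measurable g := measurable_pi_lambda _ (fun s => hvmeas s)
  set m : (ℝ → ℝ) → ℝ := fun x => F.sup' hF x with hmdef
  have hmmeas : Measurable m := by
    have h1 : m = F.sup' hF (fun s => fun x : ℝ → ℝ => x s) := by
      funext x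
      rw [Finset.sup'_apply]
    rw [h1]
    exact Finset.measurable_sup' hF (fun s _ => measurable_pi_apply s)
  set Cs : ℝ → Set (ℝ → ℝ) := fun s => {x | m x ≤ x s ∧ ∀ r ∈ F, r < s → x r < m x} with hCsdef
  have hCmeas : ∀ s, MeasurableSet (Cs s) := by
    intro s
    have h1 : MeasurableSet {x : ℝ → ℝ | m x ≤ x s} :=
      measurableSet_le hmmeas (measurable_pi_apply s)
    have h2 : {x : ℝ → ℝ | ∀ r ∈ F, r < s → x r < m x}
        = ⋂ r ∈ (F : Set ℝ), {x : ℝ → ℝ | r < s → x r < m x} := by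
      ext x; simp
    have h3 : MeasurableSet {x : ℝ → ℝ | ∀ r ∈ F, r < s → x r < m x} := by
      rw [h2]
      refine MeasurableSet.biInter F.countable_toSet (fun r _ => ?_)
      by_cases hrs : r < s
      · have : {x : ℝ → ℝ | r < s → x r < m x} = {x : ℝ → ℝ | x r < m x} := by
          ext x; simp [hrs]
        rw [this]
        exact measurableSet_lt (measurable_pi_apply r) hmmeas
      · have : {x : ℝ → ℝ | r < s → x r < m x} = Set.univ := by
          ext x; simp [hrs]
        rw [this]
        exact MeasurableSet.univ
    have h4 : Cs s = {x : ℝ → ℝ | m x ≤ x s} ∩ {x : ℝ → ℝ | ∀ r ∈ F, r < s → x r < m x} := by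
      ext x; simp [hCsdef, Set.mem_setOf_eq, Set.mem_inter_iff]
    rw [h4]; exact h1.inter h3
  have hpart : ∀ x : ℝ → ℝ, ∃ s₀ ∈ F, x ∈ Cs s₀ ∧ ∀ s ∈ F, s ≠ s₀ → x ∉ Cs s := by
    intro x
    set Smax := F.filter (fun r => m x ≤ x r) with hSmax
    have hSne : Smax.Nonempty := by
      obtain ⟨b, hb, hbe⟩ := F.exists_mem_eq_sup' hF x
      exact ⟨b, Finset.mem_filter.mpr ⟨hb, le_of_eq hbe⟩⟩
    set s₀ := Smax.min' hSne with hs₀def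
    have hs₀mem := Smax.min'_mem hSne
    have hs₀F : s₀ ∈ F := (Finset.mem_filter.mp hs₀mem).1
    have hs₀max : m x ≤ x s₀ := (Finset.mem_filter.mp hs₀mem).2
    refine ⟨s₀, hs₀F, ⟨hs₀max, fun r hr hrs => ?_⟩, ?_⟩
    · by_contra hcon
      push_neg at hcon
      have : r ∈ Smax := Finset.mem_filter.mpr ⟨hr, hcon⟩
      exact absurd (Finset.min'_le _ _ this) (not_le.mpr hrs)
    · intro s hs hne hmem
      rcases lt_or_gt_of_ne hne with hlt | hgt
      · have : s ∈ Smax := Finset.mem_filter.mpr ⟨hs, hmem.1⟩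
        exact absurd (Finset.min'_le _ _ this) (not_le.mpr hlt)
      · exact absurd (hmem.2 s₀ hs₀F hgt) (not_lt.mpr hs₀max)
  set φ1 : ℝ → (ℝ → ℝ) → ℝ≥0∞ :=
    fun s => (Cs s).indicator (fun x => ENNReal.ofReal (Real.exp (p * m x))) with hφ1def
  set φ2 : ℝ → (ℝ → ℝ) → ℝ≥0∞ :=
    fun s => ({y : ℝ → ℝ | -K ≤ y s}).indicator (fun _ => 1) with hφ2def
  have hφ1meas : ∀ s, Measurable (φ1 s) := fun s =>
    (ENNReal.measurable_ofReal.comp (Real.measurable_exp.comp (hmmeas.const_mul p))).indicator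
      (hCmeas s)
  have hφ2meas : ∀ s, Measurable (φ2 s) := fun s =>
    measurable_const.indicator (measurableSet_le measurable_const (measurable_pi_apply s))
  have hindep2 : ∀ s : ℝ,
      IndepFun (fun ω => φ1 s (f ω)) (fun ω => φ2 s (g ω)) P := fun s =>
    hindep.comp (hφ1meas s) (hφ2meas s)
  have hu_meas : ∀ s, Measurable fun ω => φ1 s (f ω) := fun s => (hφ1meas s).comp hfmeas
  have hv_meas : ∀ s, Measurable fun ω => φ2 s (g ω) := fun s => (hφ2meas s).comp hgmeas
  have hv2 : ∀ s ∈ Set.Icc (0:ℝ) t, half ≤ ∫⁻ ω, φ2 s (g ω) ∂P := by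
    intro s hs
    have hset : MeasurableSet {ω | -K ≤ X s ω - Y s ω} :=
      measurableSet_le measurable_const (hvmeas s)
    have heq : (fun ω => φ2 s (g ω))
        = ({ω | -K ≤ X s ω - Y s ω}).indicator (fun _ => (1:ℝ≥0∞)) := by
      funext ω
      by_cases h : -K ≤ X s ω - Y s ω
      · have l : φ2 s (g ω) = 1 :=
          Set.indicator_of_mem (show g ω ∈ {y : ℝ → ℝ | -K ≤ y s} from h) _
        have r : ({ω | -K ≤ X s ω - Y s ω}).indicator (fun _ => (1:ℝ≥0∞)) ω = 1 :=
          Set.indicator_of_mem (show ω ∈ {ω | -K ≤ X s ω - Y s ω} from h) _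
        rw [l, r]
      · have l : φ2 s (g ω) = 0 :=
          Set.indicator_of_notMem (show g ω ∉ {y : ℝ → ℝ | -K ≤ y s} from h) _
        have r : ({ω | -K ≤ X s ω - Y s ω}).indicator (fun _ => (1:ℝ≥0∞)) ω = 0 :=
          Set.indicator_of_notMem (show ω ∉ {ω | -K ≤ X s ω - Y s ω} from h) _
        rw [l, r]
    rw [heq]
    have h5 : (∫⁻ ω, ({ω | -K ≤ X s ω - Y s ω}).indicator (fun _ => (1:ℝ≥0∞)) ω ∂P)
        = P {ω | -K ≤ X s ω - Y s ω} := by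
      have := lintegral_indicator_one (μ := P) hset
      rw [← this]
      rfl
    rw [h5]
    exact hv s hs
  have hsum_le : ∀ᵐ ω ∂P, ∑ s ∈ F, φ1 s (f ω) * φ2 s (g ω) ≤
      ENNReal.ofReal (Real.exp (p * K)) *
        ENNReal.ofReal (Real.exp (p * runSup X t ω)) := by
    filter_upwards [hgoodX] with ω hbdd
    obtain ⟨s₀, hs₀F, hs₀in, hs₀uniq⟩ := hpart (f ω)
    rw [Finset.sum_eq_single_of_mem s₀ hs₀F (fun s hs hne => by
      have : φ1 s (f ω) = 0 := Set.indicator_of_notMem (hs₀uniq s hs hne) _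
      rw [this, zero_mul])]
    by_cases hvK : -K ≤ g ω s₀
    · have hφ2v : φ2 s₀ (g ω) = 1 :=
        Set.indicator_of_mem (show g ω ∈ {y : ℝ → ℝ | -K ≤ y s₀} from hvK) _
      have hφ1v : φ1 s₀ (f ω) = ENNReal.ofReal (Real.exp (p * m (f ω))) :=
        Set.indicator_of_mem hs₀in (fun x => ENNReal.ofReal (Real.exp (p * m x)))
      rw [hφ1v, hφ2v, mul_one]
      have h1 : m (f ω) ≤ f ω s₀ := hs₀in.1
      have h3 : Y s₀ ω ≤ X s₀ ω + K := by
        have h3' : -K ≤ X s₀ ω - Y s₀ ω := hvK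
        linarith
      have h4 : X s₀ ω ≤ runSup X t ω := by
        have hsIcc : s₀ ∈ Set.Icc (0:ℝ) t := hFsub hs₀F
        have hb : BddAbove (Set.range fun s : Set.Icc (0:ℝ) t => X (s:ℝ) ω) := by
          rw [← Set.image_eq_range (fun r => X r ω) (Set.Icc (0:ℝ) t)]
          exact hbdd
        exact le_ciSup hb ⟨s₀, hsIcc⟩
      have h5 : m (f ω) ≤ runSup X t ω + K := by
        have h2 : f ω s₀ = Y s₀ ω := rfl
        rw [h2] at h1
        linarith
      calc ENNReal.ofReal (Real.exp (p * m (f ω)))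
          ≤ ENNReal.ofReal (Real.exp (p * (runSup X t ω + K))) := by
            apply ENNReal.ofReal_le_ofReal
            apply Real.exp_le_exp.mpr
            exact mul_le_mul_of_nonneg_left h5 hp.le
        _ = ENNReal.ofReal (Real.exp (p * K)) *
            ENNReal.ofReal (Real.exp (p * runSup X t ω)) := by
            rw [← ENNReal.ofReal_mul (Real.exp_pos _).le, ← Real.exp_add]
            congr 1
            ring
    · have : φ2 s₀ (g ω) = 0 :=
        Set.indicator_of_notMem (show g ω ∉ {y : ℝ → ℝ | -K ≤ y s₀} from hvK) _
      rw [this, mul_zero]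
      exact zero_le
  have hsum_split : ∀ ω, ENNReal.ofReal (Real.exp (p * m (f ω))) = ∑ s ∈ F, φ1 s (f ω) := by
    intro ω
    obtain ⟨s₀, hs₀F, hs₀in, hs₀uniq⟩ := hpart (f ω)
    have hcollapse : ∑ s ∈ F, φ1 s (f ω) = φ1 s₀ (f ω) :=
      Finset.sum_eq_single_of_mem s₀ hs₀F
        (fun s hs hne => Set.indicator_of_notMem (hs₀uniq s hs hne) _)
    rw [hcollapse]
    exact (Set.indicator_of_mem hs₀in (fun x => ENNReal.ofReal (Real.exp (p * m x)))).symm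
  calc (∫⁻ ω, ENNReal.ofReal (Real.exp (p * F.sup' hF fun s => Y s ω)) ∂P) * half
      = (∑ s ∈ F, ∫⁻ ω, φ1 s (f ω) ∂P) * half := by
        congr 1
        rw [← lintegral_finset_sum _ (fun s _ => hu_meas s)]
        exact lintegral_congr fun ω => hsum_split ω
    _ = ∑ s ∈ F, (∫⁻ ω, φ1 s (f ω) ∂P) * half := by rw [Finset.sum_mul]
    _ ≤ ∑ s ∈ F, (∫⁻ ω, φ1 s (f ω) ∂P) * ∫⁻ ω, φ2 s (g ω) ∂P := by
        refine Finset.sum_le_sum fun s hs => ?_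
        exact mul_le_mul_right (hv2 s (hFsub hs)) _
    _ = ∑ s ∈ F, ∫⁻ ω, ((fun ω => φ1 s (f ω)) * fun ω => φ2 s (g ω)) ω ∂P := by
        refine Finset.sum_congr rfl fun s _ => ?_
        exact (ProbabilityTheory.lintegral_mul_eq_lintegral_mul_lintegral_of_indepFun
          (hu_meas s) (hv_meas s) (hindep2 s)).symm
    _ = ∫⁻ ω, ∑ s ∈ F, φ1 s (f ω) * φ2 s (g ω) ∂P := by
        rw [← lintegral_finset_sum]
        · rfl
        · intro s _
          exact (hu_meas s).mul (hv_meas s)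
    _ ≤ ∫⁻ ω, ENNReal.ofReal (Real.exp (p * K)) *
          ENNReal.ofReal (Real.exp (p * runSup X t ω)) ∂P := lintegral_mono_ae hsum_le
    _ = ENNReal.ofReal (Real.exp (p * K)) *
          ∫⁻ ω, ENNReal.ofReal (Real.exp (p * runSup X t ω)) ∂P :=
        lintegral_const_mul' _ _ ENNReal.ofReal_ne_top


set_option maxHeartbeats 1000000 in
/-- Lemma 1: if `E e^{pM_t} < ∞` then `sup_{0<δ≤1} E e^{pM^δ_t} < ∞`. -/
theorem exp_sup_uniform_bound
    {Ω : Type*} [MeasurableSpace Ω] (P : Measure Ω) [IsProbabilityMeasure P]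
    (γ b : ℝ) (hb0 : 0 ≤ b) (ν : Measure ℝ) (hν : IsLevyMeasure ν)
    (X : ℝ → Ω → ℝ) (Xe : ℝ → ℝ → Ω → ℝ)
    (hX : IsLevyProcess P X)
    (hXchar : HasCharExponent P X (levyExponent γ b ν))
    (hXe : ∀ ε ∈ Set.Ioc (0:ℝ) 1, IsLevyProcess P (Xe ε))
    (hXechar : ∀ ε ∈ Set.Ioc (0:ℝ) 1, HasCharExponent P (Xe ε) (truncExponent γ b ν ε))
    (hRchar : ∀ ε ∈ Set.Ioc (0:ℝ) 1,
      HasCharExponent P (fun s ω => X s ω - Xe ε s ω) (smallExponent ν ε))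
    (hIndep : ∀ ε ∈ Set.Ioc (0:ℝ) 1,
      IndepFun (fun ω => fun s : ℝ => Xe ε s ω) (fun ω => fun s : ℝ => X s ω - Xe ε s ω) P)
    (t : ℝ) (ht : 0 ≤ t) (p : ℝ) (hp : 0 < p)
    (hexp : Integrable (fun ω => Real.exp (p * runSup X t ω)) P) :
    (⨆ δ ∈ Set.Ioc (0:ℝ) 1,
      ∫⁻ ω, ENNReal.ofReal (Real.exp (p * runSup (Xe δ) t ω)) ∂P) < ⊤ := by
  classical
  obtain ⟨K, hK0, hKcon⟩ := concentration P ν hν t ht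
  have hA0fin : (∫⁻ ω, ENNReal.ofReal (Real.exp (p * runSup X t ω)) ∂P) < ⊤ := by
    have h1 := hexp.hasFiniteIntegral
    rw [hasFiniteIntegral_iff_norm] at h1
    calc ∫⁻ ω, ENNReal.ofReal (Real.exp (p * runSup X t ω)) ∂P
        = ∫⁻ ω, ENNReal.ofReal ‖Real.exp (p * runSup X t ω)‖ ∂P := by
          refine lintegral_congr fun ω => ?_
          rw [Real.norm_eq_abs, abs_of_pos (Real.exp_pos _)]
      _ < ⊤ := h1
  set half : ℝ≥0∞ := 1 - ENNReal.ofReal (1/2) with hhalfdef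
  have hhalf0 : half ≠ 0 := by
    have h1 : ENNReal.ofReal (1/2) < 1 := ENNReal.ofReal_lt_one.mpr (by norm_num)
    exact (tsub_pos_iff_lt.mpr h1).ne'
  have hhalftop : half ≠ ⊤ := (lt_of_le_of_lt tsub_le_self ENNReal.one_lt_top).ne
  set C0 : ℝ≥0∞ := (ENNReal.ofReal (Real.exp (p * K)) *
      ∫⁻ ω, ENNReal.ofReal (Real.exp (p * runSup X t ω)) ∂P) / half with hC0def
  have hC0top : C0 < ⊤ := by
    apply ENNReal.div_lt_top
    · exact (ENNReal.mul_lt_top ENNReal.ofReal_lt_top hA0fin).ne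
    · exact hhalf0
  haveI : Nonempty (Set.Icc (0:ℝ) t) := ⟨⟨0, le_refl 0, ht⟩⟩
  have hgoodX : ∀ᵐ ω ∂P, BddAbove ((fun s => X s ω) '' Set.Icc 0 t) := by
    filter_upwards [hX.rightCont, hX.leftLim] with ω h1 h2
    exact bddAbove_of_cadlag ht h1 h2
  have main : ∀ δ ∈ Set.Ioc (0:ℝ) 1,
      (∫⁻ ω, ENNReal.ofReal (Real.exp (p * runSup (Xe δ) t ω)) ∂P) ≤ C0 := by
    intro δ hδ
    have hv : ∀ s ∈ Set.Icc (0:ℝ) t, half ≤ P {ω | -K ≤ X s ω - Xe δ s ω} := by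
      intro s hs
      have hgs : Measurable fun ω => X s ω - Xe δ s ω := (hX.meas s).sub ((hXe δ hδ).meas s)
      have hset : MeasurableSet {ω | -K ≤ X s ω - Xe δ s ω} :=
        measurableSet_le measurable_const hgs
      have hcompl : P {ω | -K ≤ X s ω - Xe δ s ω}ᶜ ≤ ENNReal.ofReal (1/2) := by
        have hsubset : {ω | -K ≤ X s ω - Xe δ s ω}ᶜ ⊆ {ω | K ≤ |X s ω - Xe δ s ω|} := by
          intro ω hω
          simp only [Set.mem_compl_iff, Set.mem_setOf_eq, not_le] at hω
          have h2 : K ≤ -(X s ω - Xe δ s ω) := by linarith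
          exact Set.mem_setOf_eq ▸ h2.trans (neg_le_abs _)
        refine le_trans (measure_mono hsubset) ?_
        exact hKcon _ hgs δ hδ s hs (fun u => hRchar δ hδ s hs.1 u)
      have h3 := prob_compl_eq_one_sub (μ := P) hset
      have h4 : half ≤ 1 - P {ω | -K ≤ X s ω - Xe δ s ω}ᶜ := tsub_le_tsub_left hcompl 1
      rwa [h3, ENNReal.sub_sub_cancel ENNReal.one_ne_top (prob_le_one (μ := P))] at h4
    set d : ℕ → ℝ := fun n => Nat.casesOn n t
      (fun k => max 0 (min t ((Denumerable.ofNat ℚ k : ℚ) : ℝ))) with hddef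
    have hd0 : d 0 = t := rfl
    have hdmem : ∀ n, d n ∈ Set.Icc (0:ℝ) t := by
      intro n
      cases n with
      | zero => exact ⟨ht, le_refl t⟩
      | succ k => exact ⟨le_max_left _ _, max_le ht (min_le_left _ _)⟩
    have hddense : ∀ s : ℝ, 0 ≤ s → s < t → ∀ ε : ℝ, 0 < ε →
        ∃ n, s < d n ∧ d n < s + ε := by
      intro s hs0 hst ε hε
      obtain ⟨q, hq1, hq2⟩ := exists_rat_btwn (show s < min t (s + ε) by
        rw [lt_min_iff]; exact ⟨hst, by linarith⟩)
      obtain ⟨k, hk⟩ : ∃ k : ℕ, (Denumerable.ofNat ℚ k : ℚ) = q :=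
        ⟨@Encodable.encode ℚ Denumerable.toEncodable q, Denumerable.ofNat_encode q⟩
      have hdval : d (k + 1) = (q : ℝ) := by
        show max 0 (min t ((Denumerable.ofNat ℚ k : ℚ) : ℝ)) = (q:ℝ)
        rw [hk]
        rw [min_eq_right (le_of_lt (lt_of_lt_of_le hq2 (min_le_left _ _)))]
        rw [max_eq_right (le_trans hs0 hq1.le)]
      refine ⟨k + 1, ?_, ?_⟩
      · rw [hdval]; exact hq1
      · rw [hdval]; exact lt_of_lt_of_le hq2 (min_le_right _ _)
    have hFne : ∀ n : ℕ, ((Finset.range (n+1)).image d).Nonempty :=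
      fun n => Finset.Nonempty.image (Finset.nonempty_range_iff.mpr (Nat.succ_ne_zero n)) d
    set G : ℕ → Ω → ℝ := fun n ω => ((Finset.range (n+1)).image d).sup' (hFne n)
        (fun s => Xe δ s ω) with hGdef
    have hFn_sub : ∀ n, ↑((Finset.range (n+1)).image d) ⊆ Set.Icc (0:ℝ) t := by
      intro n x hx
      rw [Finset.mem_coe, Finset.mem_image] at hx
      obtain ⟨k, _, rfl⟩ := hx
      exact hdmem k
    have hGmono : ∀ ω, Monotone fun n => G n ω := by
      intro ω a b hab
      exact Finset.sup'_mono _ (Finset.image_subset_image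
        (Finset.range_subset_range.mpr (by omega))) (hFne a)
    have hGmeas : ∀ n, Measurable (G n) := by
      intro n
      have h1 : G n = ((Finset.range (n+1)).image d).sup' (hFne n) (fun s ω => Xe δ s ω) := by
        funext ω
        rw [Finset.sup'_apply]
      rw [h1]
      exact Finset.measurable_sup' (hFne n) (fun s _ => (hXe δ hδ).meas s)
    have hkey : ∀ n, (∫⁻ ω, ENNReal.ofReal (Real.exp (p * G n ω)) ∂P) * half ≤
        ENNReal.ofReal (Real.exp (p * K)) *
          ∫⁻ ω, ENNReal.ofReal (Real.exp (p * runSup X t ω)) ∂P :=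
      fun n => key_finset P X (Xe δ) t p K hp ((hXe δ hδ).meas) (hIndep δ hδ) half hv
        (fun s => (hX.meas s).sub ((hXe δ hδ).meas s)) hgoodX _ (hFne n) (hFn_sub n)
    have hn_le : ∀ n, (∫⁻ ω, ENNReal.ofReal (Real.exp (p * G n ω)) ∂P) ≤ C0 := by
      intro n
      rw [hC0def, ENNReal.le_div_iff_mul_le (Or.inl hhalf0) (Or.inl hhalftop)]
      exact hkey n
    have hae : ∀ᵐ ω ∂P, ENNReal.ofReal (Real.exp (p * runSup (Xe δ) t ω))
        = ⨆ n, ENNReal.ofReal (Real.exp (p * G n ω)) := by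
      filter_upwards [(hXe δ hδ).rightCont, (hXe δ hδ).leftLim] with ω h1 h2
      have hbdd : BddAbove ((fun s => Xe δ s ω) '' Set.Icc 0 t) :=
        bddAbove_of_cadlag ht h1 h2
      have hbR : BddAbove (Set.range fun s : Set.Icc (0:ℝ) t => Xe δ (s:ℝ) ω) := by
        rw [← Set.image_eq_range (fun r => Xe δ r ω) (Set.Icc (0:ℝ) t)]
        exact hbdd
      have hGle : ∀ n, G n ω ≤ runSup (Xe δ) t ω := by
        intro n
        refine Finset.sup'_le _ _ fun s hs => ?_
        exact le_ciSup hbR ⟨s, hFn_sub n hs⟩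
      have hbG : BddAbove (Set.range fun n => G n ω) := by
        refine ⟨runSup (Xe δ) t ω, ?_⟩
        rintro y ⟨n, rfl⟩
        exact hGle n
      have hdle : ∀ n, Xe δ (d n) ω ≤ ⨆ k, G k ω := by
        intro n
        have hmem : d n ∈ (Finset.range (n+1)).image d :=
          Finset.mem_image.mpr ⟨n, Finset.mem_range.mpr (Nat.lt_succ_self n), rfl⟩
        exact le_trans (Finset.le_sup' (fun s => Xe δ s ω) hmem) (le_ciSup hbG n)
      have hL2 : runSup (Xe δ) t ω ≤ ⨆ n, G n ω := by
        refine ciSup_le fun sc => ?_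
        obtain ⟨s, hs⟩ := sc
        show Xe δ s ω ≤ ⨆ n, G n ω
        rcases eq_or_lt_of_le hs.2 with hst | hst
        · have heq : Xe δ s ω = Xe δ (d 0) ω := by rw [hd0, hst]
          rw [heq]
          exact hdle 0
        · have hex : ∀ k : ℕ, ∃ n, s < d n ∧ d n < s + 1/((k:ℝ)+1) :=
            fun k => hddense s hs.1 hst _ (by positivity)
          choose idx hidx1 hidx2 using hex
          have hrt : Tendsto (fun k => d (idx k)) atTop (nhds s) := by
            refine tendsto_of_tendsto_of_tendsto_of_le_of_le
              (tendsto_const_nhds : Filter.Tendsto (fun _ : ℕ => s) atTop (nhds s)) ?_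
              (fun k => (hidx1 k).le) (fun k => (hidx2 k).le)
            have h6 : Tendsto (fun k : ℕ => s + 1/((k:ℝ)+1)) atTop (nhds (s + 0)) :=
              tendsto_const_nhds.add tendsto_one_div_add_atTop_nhds_zero_nat
            simpa using h6
          have htendXe : Tendsto (fun k => Xe δ (d (idx k)) ω) atTop (nhds (Xe δ s ω)) := by
            have hcw := h1 s hs.1
            refine hcw.tendsto.comp ?_
            exact tendsto_nhdsWithin_of_tendsto_nhds_of_eventually_within _ hrt
              (Eventually.of_forall fun k => (hidx1 k).le)
          exact le_of_tendsto htendXe (Eventually.of_forall fun k => hdle (idx k))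
      have hLeq : runSup (Xe δ) t ω = ⨆ n, G n ω := le_antisymm hL2 (ciSup_le hGle)
      have h3 : Tendsto (fun n => G n ω) atTop (nhds (⨆ n, G n ω)) :=
        tendsto_atTop_ciSup (hGmono ω) hbG
      have h4 : Tendsto (fun n => ENNReal.ofReal (Real.exp (p * G n ω))) atTop
          (nhds (ENNReal.ofReal (Real.exp (p * ⨆ n, G n ω)))) := by
        refine (ENNReal.continuous_ofReal.tendsto _).comp ?_
        refine (Real.continuous_exp.tendsto _).comp ?_
        exact h3.const_mul p
      have h5 : Tendsto (fun n => ENNReal.ofReal (Real.exp (p * G n ω))) atTop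
          (nhds (⨆ n, ENNReal.ofReal (Real.exp (p * G n ω)))) := by
        apply tendsto_atTop_iSup
        intro a b hab
        exact ENNReal.ofReal_le_ofReal (Real.exp_le_exp.mpr
          (mul_le_mul_of_nonneg_left (hGmono ω hab) hp.le))
      rw [hLeq]
      exact tendsto_nhds_unique h4 h5
    calc ∫⁻ ω, ENNReal.ofReal (Real.exp (p * runSup (Xe δ) t ω)) ∂P
        = ∫⁻ ω, ⨆ n, ENNReal.ofReal (Real.exp (p * G n ω)) ∂P := lintegral_congr_ae hae
      _ = ⨆ n, ∫⁻ ω, ENNReal.ofReal (Real.exp (p * G n ω)) ∂P := by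
          refine lintegral_iSup (fun n => ?_) (fun a b hab ω => ?_)
          · exact ENNReal.measurable_ofReal.comp
              (Real.measurable_exp.comp ((hGmeas n).const_mul p))
          · exact ENNReal.ofReal_le_ofReal (Real.exp_le_exp.mpr
              (mul_le_mul_of_nonneg_left (hGmono ω hab) hp.le))
      _ ≤ C0 := iSup_le hn_le
  exact lt_of_le_of_lt (iSup₂_le main) hC0top

end LevyApprox
end
end

section
/- Let X and Y be two real random variables on the same probability space. Assume that X has a probability density function which is bounded on some neighbourhood of a point x ∈ ℝ, and that there exists p > 0 such that E|X − Y|^p < ∞. Then there exists a constant K_x > 0 such that for every δ > 0, |P[X ≥ x] − P[Y ≥ x]| ≤ K_x δ + E|X − Y|^p / δ^p. -/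
open MeasureTheory ProbabilityTheory Filter Asymptotics

noncomputable section

namespace LevyApprox

variable {Ω : Type*} [MeasurableSpace Ω]

/-- Lemma 2: comparison of the cumulative distribution functions of two
random variables, when one of them has a density bounded near `x`. -/
theorem cdf_difference_bound
    {Ω : Type*} [MeasurableSpace Ω] (P : Measure Ω) [IsProbabilityMeasure P]
    (X Y : Ω → ℝ) (hX : Measurable X) (hY : Measurable Y)
    (x : ℝ) (f : ℝ → ℝ) (hf0 : ∀ y : ℝ, 0 ≤ f y)
    (hfd : Measure.map X P = MeasureTheory.volume.withDensity (fun y => ENNReal.ofReal (f y)))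
    (hbd : ∃ s ∈ nhds x, ∃ C : ℝ, ∀ y ∈ s, f y ≤ C)
    (p : ℝ) (hp : 0 < p)
    (hmom : ∫⁻ ω, ENNReal.ofReal (|X ω - Y ω| ^ p) ∂P < ⊤) :
    ∃ K : ℝ, 0 < K ∧ ∀ δ : ℝ, 0 < δ →
      |(P {ω | x ≤ X ω}).toReal - (P {ω | x ≤ Y ω}).toReal|
        ≤ K * δ + (∫ ω, |X ω - Y ω| ^ p ∂P) / δ ^ p := by
  obtain ⟨s, hs, C, hC⟩ := hbd
  obtain ⟨r, hr, hball⟩ := Metric.nhds_basis_closedBall.mem_iff.mp hs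
  have hxs : x ∈ s := mem_of_mem_nhds hs
  have hC0 : 0 ≤ C := (hf0 x).trans (hC x hxs)
  set g : Ω → ℝ := fun ω => |X ω - Y ω| ^ p with hg
  have hg0 : ∀ ω, 0 ≤ g ω := fun ω => Real.rpow_nonneg (abs_nonneg _) p
  have hgm : Measurable g := (Measurable.abs (hX.sub hY)).pow_const p
  have hgint : Integrable g P := by
    refine ⟨hgm.aestronglyMeasurable, ?_⟩
    rw [hasFiniteIntegral_iff_norm]
    calc ∫⁻ ω, ENNReal.ofReal ‖g ω‖ ∂P = ∫⁻ ω, ENNReal.ofReal (g ω) ∂P := by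
          congr 1; funext ω; rw [Real.norm_of_nonneg (hg0 ω)]
      _ < ⊤ := hmom
  have hlint : ∫⁻ ω, ENNReal.ofReal (g ω) ∂P = ENNReal.ofReal (∫ ω, g ω ∂P) :=
    (ofReal_integral_eq_lintegral_ofReal hgint (Filter.Eventually.of_forall hg0)).symm
  refine ⟨max (2 * C + 1) (1 / r), lt_max_of_lt_left (by linarith), fun δ hδ => ?_⟩
  set K := max (2 * C + 1) (1 / r) with hK
  set A := {ω | x ≤ X ω}
  set B := {ω | x ≤ Y ω}
  set D := X ⁻¹' Set.Ico (x - δ) (x + δ)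
  set E := {ω | δ ≤ |X ω - Y ω|}
  have hAm : MeasurableSet A := hX measurableSet_Ici
  have hBm : MeasurableSet B := hY measurableSet_Ici
  have hDm : MeasurableSet D := hX measurableSet_Ico
  have hEm : MeasurableSet E := measurableSet_le measurable_const (hX.sub hY).abs
  -- symmetric difference inclusions
  have hsub1 : A ⊆ B ∪ D ∪ E := by
    intro ω hω
    by_cases h1 : x ≤ Y ω
    · exact Or.inl (Or.inl h1)
    push_neg at h1
    by_cases h2 : X ω < x + δ
    · exact Or.inl (Or.inr ⟨by simp only [Set.mem_setOf_eq, A] at hω; linarith, h2⟩)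
    · push_neg at h2
      simp only [Set.mem_setOf_eq, A] at hω
      refine Or.inr (le_trans (by linarith : δ ≤ X ω - Y ω) (le_abs_self _))
  have hsub2 : B ⊆ A ∪ D ∪ E := by
    intro ω hω
    by_cases h1 : x ≤ X ω
    · exact Or.inl (Or.inl h1)
    push_neg at h1
    by_cases h2 : x - δ ≤ X ω
    · exact Or.inl (Or.inr ⟨h2, by linarith⟩)
    · push_neg at h2
      simp only [Set.mem_setOf_eq, B] at hω
      refine Or.inr (le_trans (by linarith : δ ≤ -(X ω - Y ω)) (neg_le_abs _))
  have hfin : ∀ T : Set Ω, P T ≠ ⊤ := fun T => (measure_lt_top P T).ne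
  have hmono : ∀ S T U V : Set Ω, S ⊆ T ∪ U ∪ V →
      (P S).toReal ≤ (P T).toReal + (P U).toReal + (P V).toReal := by
    intro S T U V hsub
    have : P S ≤ P T + P U + P V :=
      (measure_mono hsub).trans ((measure_union_le _ _).trans
        (add_le_add (measure_union_le _ _) le_rfl))
    have := ENNReal.toReal_mono (by finiteness) this
    rwa [ENNReal.toReal_add (by finiteness) (hfin V),
      ENNReal.toReal_add (hfin T) (hfin U)] at this
  have habs : |(P A).toReal - (P B).toReal| ≤ (P D).toReal + (P E).toReal := by
    rw [abs_sub_le_iff]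
    constructor
    · have := hmono A B D E hsub1; linarith
    · have := hmono B A D E hsub2; linarith
  -- bound on P D
  have hD : (P D).toReal ≤ K * δ := by
    by_cases hδr : δ ≤ r
    · have hPD : P D = ∫⁻ y in Set.Ico (x - δ) (x + δ), ENNReal.ofReal (f y) := by
        rw [← Measure.map_apply hX measurableSet_Ico, hfd,
          withDensity_apply _ measurableSet_Ico]
      have hle : ∫⁻ y in Set.Ico (x - δ) (x + δ), ENNReal.ofReal (f y)
          ≤ ENNReal.ofReal C * volume (Set.Ico (x - δ) (x + δ)) := by
        rw [← setLIntegral_const]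
        refine setLIntegral_mono measurable_const fun y hy => ?_
        refine ENNReal.ofReal_le_ofReal (hC y (hball ?_))
        simp only [Metric.mem_closedBall, Real.dist_eq]
        rw [abs_le]
        obtain ⟨h1, h2⟩ := hy
        constructor <;> linarith
      have : (P D).toReal ≤ C * (2 * δ) := by
        rw [hPD]
        calc (∫⁻ y in Set.Ico (x - δ) (x + δ), ENNReal.ofReal (f y)).toReal
            ≤ (ENNReal.ofReal C * volume (Set.Ico (x - δ) (x + δ))).toReal := by
              apply ENNReal.toReal_mono _ hle
              rw [Real.volume_Ico]
              finiteness
          _ = C * (2 * δ) := by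
              rw [Real.volume_Ico, ENNReal.toReal_mul, ENNReal.toReal_ofReal hC0,
                ENNReal.toReal_ofReal (by linarith)]
              ring_nf
      calc (P D).toReal ≤ C * (2 * δ) := this
        _ ≤ K * δ := by
            have : 2 * C ≤ K := le_trans (by linarith) (le_max_left _ _)
            nlinarith
    · push_neg at hδr
      have h1 : (P D).toReal ≤ 1 := by
        rw [← ENNReal.toReal_one]
        exact ENNReal.toReal_mono ENNReal.one_ne_top prob_le_one
      have h2 : (1 : ℝ) ≤ K * δ := by
        have hKr : 1 / r ≤ K := le_max_right _ _
        have : 1 / r * r ≤ K * δ := by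
          apply mul_le_mul hKr hδr.le hr.le (le_trans (by positivity) hKr)
        rwa [one_div_mul_cancel hr.ne'] at this
      linarith
  -- Markov bound on P E
  have hE : (P E).toReal ≤ (∫ ω, g ω ∂P) / δ ^ p := by
    have hEsub : E ⊆ {ω | ENNReal.ofReal (δ ^ p) ≤ ENNReal.ofReal (g ω)} := by
      intro ω hω
      exact ENNReal.ofReal_le_ofReal (Real.rpow_le_rpow hδ.le hω hp.le)
    have hmark := meas_ge_le_lintegral_div (μ := P)
      (f := fun ω => ENNReal.ofReal (g ω))
      (hgm.ennreal_ofReal.aemeasurable)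
      (ε := ENNReal.ofReal (δ ^ p))
      (ne_of_gt (ENNReal.ofReal_pos.mpr (Real.rpow_pos_of_pos hδ p))) ENNReal.ofReal_ne_top
    have : P E ≤ ENNReal.ofReal ((∫ ω, g ω ∂P) / δ ^ p) := by
      calc P E ≤ P {ω | ENNReal.ofReal (δ ^ p) ≤ ENNReal.ofReal (g ω)} := measure_mono hEsub
        _ ≤ (∫⁻ ω, ENNReal.ofReal (g ω) ∂P) / ENNReal.ofReal (δ ^ p) := hmark
        _ = ENNReal.ofReal ((∫ ω, g ω ∂P) / δ ^ p) := by
            rw [hlint, ENNReal.ofReal_div_of_pos (Real.rpow_pos_of_pos hδ p)]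
    calc (P E).toReal ≤ (ENNReal.ofReal ((∫ ω, g ω ∂P) / δ ^ p)).toReal :=
          ENNReal.toReal_mono ENNReal.ofReal_ne_top this
      _ ≤ (∫ ω, g ω ∂P) / δ ^ p := by
          rw [ENNReal.toReal_ofReal
            (div_nonneg (integral_nonneg hg0) (Real.rpow_pos_of_pos hδ p).le)]
  calc |(P A).toReal - (P B).toReal| ≤ (P D).toReal + (P E).toReal := habs
    _ ≤ K * δ + (∫ ω, g ω ∂P) / δ ^ p := add_le_add hD hE

end LevyApprox
end
end

section
/- Let X be a real-valued Lévy process with generating triplet (γ, b², ν) with b > 0, and let t > 0. Then for all ε ∈ (0,1], sup_{x∈ℝ} |P[X_t ≥ x] − P[X^ε_t ≥ x]| ≤ σ(ε) / (√(2π) b). -/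
open MeasureTheory ProbabilityTheory Filter Asymptotics
open scoped NNReal ENNReal

noncomputable section

namespace LevyApprox

variable {Ω : Type*} [MeasurableSpace Ω]

open Real in
private lemma exp_taylor3 {θ : ℝ} (h : |θ| ≤ 1) :
    ‖Complex.exp (Complex.I * θ) - 1 - Complex.I * θ + ((θ^2/2 : ℝ) : ℂ)‖ ≤ 2/9 * |θ|^3 := by
  have hx : ‖Complex.I * θ‖ ≤ 1 := by
    simpa [Complex.norm_real] using h
  have hb := Complex.exp_bound hx (n := 3) (by norm_num)
  have hsum : (∑ m ∈ Finset.range 3, (Complex.I * θ) ^ m / m.factorial)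
      = 1 + Complex.I * θ - ((θ^2/2 : ℝ) : ℂ) := by
    simp [Finset.sum_range_succ]
    push_cast
    ring_nf
    simp [Complex.I_sq]
    ring
  rw [hsum] at hb
  have habs : ‖Complex.I * θ‖ = |θ| := by
    simp [Complex.norm_real]
  rw [habs] at hb
  calc ‖Complex.exp (Complex.I * θ) - 1 - Complex.I * θ + ((θ^2/2 : ℝ) : ℂ)‖
      = ‖Complex.exp (Complex.I * θ) - (1 + Complex.I * θ - ((θ^2/2 : ℝ) : ℂ))‖ := by
        ring_nf
    _ ≤ |θ| ^ 3 * ((3:ℕ).succ * ((3:ℕ).factorial * (3:ℕ) : ℝ)⁻¹) := hb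
    _ ≤ 2/9 * |θ|^3 := by
        norm_num [Nat.factorial]
        ring_nf
        norm_num

open Real in
private lemma gauss_surv_lip (v : ℝ≥0) (hv : v ≠ 0) {a a' : ℝ} (hle : a ≤ a') :
    ((gaussianReal 0 v) (Set.Ici a)).toReal - ((gaussianReal 0 v) (Set.Ici a')).toReal
      ≤ (a' - a) * (Real.sqrt (2 * π * v))⁻¹ := by
  set μ := gaussianReal 0 v
  have hfin : ∀ s : Set ℝ, μ s ≠ ⊤ := fun s => measure_ne_top μ s
  have hsub : Set.Ici a' ⊆ Set.Ici a := Set.Ici_subset_Ici.2 hle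
  have hdiff : Set.Ici a \ Set.Ici a' = Set.Ico a a' := by
    ext y; simp [Set.mem_Ico, Set.mem_Ici, not_le]

  have h1 : μ (Set.Ici a) - μ (Set.Ici a') = μ (Set.Ico a a') := by
    rw [← hdiff, measure_diff hsub measurableSet_Ici.nullMeasurableSet (hfin _)]
  have h2 : ((μ (Set.Ici a)).toReal - (μ (Set.Ici a')).toReal) = (μ (Set.Ico a a')).toReal := by
    rw [← h1, ENNReal.toReal_sub_of_le (measure_mono hsub) (hfin _)]
  rw [h2]
  have hIco : μ (Set.Ico a a') = ENNReal.ofReal (∫ x in Set.Ico a a', gaussianPDFReal 0 v x) :=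
    gaussianReal_apply_eq_integral 0 hv _
  have hbd : ∫ x in Set.Ico a a', gaussianPDFReal 0 v x ≤ (a' - a) * (Real.sqrt (2 * π * v))⁻¹ := by
    have := norm_setIntegral_le_of_norm_le_const (μ := volume) (s := Set.Ico a a')
      (f := gaussianPDFReal 0 v) (C := (Real.sqrt (2 * π * v))⁻¹)
      (by simp [Real.volume_Ico])
      (fun x _ => by
        rw [Real.norm_eq_abs, abs_of_nonneg (gaussianPDFReal_nonneg 0 v x)]
        unfold gaussianPDFReal
        exact mul_le_of_le_one_right (by positivity)
          (Real.exp_le_one_iff.2 (div_nonpos_of_nonpos_of_nonneg (neg_nonpos.2 (sq_nonneg _)) (by positivity))))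
    rw [measureReal_def, Real.volume_Ico] at this
    calc ∫ x in Set.Ico a a', gaussianPDFReal 0 v x
        ≤ ‖∫ x in Set.Ico a a', gaussianPDFReal 0 v x‖ := le_abs_self _
      _ ≤ (Real.sqrt (2 * π * v))⁻¹ * (ENNReal.ofReal (a' - a)).toReal := this
      _ = (a' - a) * (Real.sqrt (2 * π * v))⁻¹ := by
          rw [ENNReal.toReal_ofReal (by linarith)]; ring
  rw [hIco, ENNReal.toReal_ofReal
    (setIntegral_nonneg measurableSet_Ico (fun x _ => gaussianPDFReal_nonneg 0 v x))]
  exact hbd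

private lemma indep_rep (P : Measure Ω) [IsProbabilityMeasure P] {Z W : Ω → ℝ}
    (hZ : Measurable Z) (hW : Measurable W) (hind : IndepFun Z W P) (x : ℝ) :
    P {ω | x ≤ Z ω + W ω} = ∫⁻ ω, (P.map Z) (Set.Ici (x - W ω)) ∂P := by
  have hmap := (indepFun_iff_map_prod_eq_prod_map_map hZ.aemeasurable hW.aemeasurable).mp hind
  have hs : MeasurableSet {p : ℝ × ℝ | x ≤ p.1 + p.2} :=
    measurableSet_le measurable_const (measurable_fst.add measurable_snd)
  have h1 : P {ω | x ≤ Z ω + W ω}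
      = (P.map (fun ω => (Z ω, W ω))) {p : ℝ × ℝ | x ≤ p.1 + p.2} := by
    rw [Measure.map_apply (hZ.prodMk hW) hs]
    rfl
  rw [h1, hmap, Measure.prod_apply_symm hs]
  have h2 : ∀ w : ℝ, ((fun z => (z, w)) ⁻¹' {p : ℝ × ℝ | x ≤ p.1 + p.2}) = Set.Ici (x - w) := by
    intro w
    ext z
    simp [Set.mem_Ici, sub_le_iff_le_add]
  simp_rw [h2]
  rw [lintegral_map ?_ hW]
  exact (Antitone.measurable (fun y y' hyy' => measure_mono (Set.Ici_subset_Ici.2 hyy'))).comp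
    (measurable_const.sub measurable_id)

open Real in
private lemma smallExp_moment (P : Measure Ω) [IsProbabilityMeasure P] (ν : Measure ℝ)
    (hν : IsLevyMeasure ν) {ε : ℝ} (hε : ε ∈ Set.Ioc (0:ℝ) 1)
    {R : Ω → ℝ} (hR : Measurable R) {t : ℝ} (ht : 0 < t)
    (hchar : ∀ u : ℝ, ∫ ω, Complex.exp (Complex.I * ((u * R ω : ℝ) : ℂ)) ∂P
      = Complex.exp ((t : ℂ) * smallExponent ν ε u)) :
    ∫⁻ ω, ENNReal.ofReal (R ω ^ 2) ∂P ≤ ENNReal.ofReal (t * sigmaFn ν ε ^ 2) := by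
  obtain ⟨hε0, hε1⟩ := hε
  have hS : MeasurableSet {x : ℝ | |x| ≤ ε} := measurableSet_le measurable_id.abs measurable_const
  set S := {x : ℝ | |x| ≤ ε} with hSdef
  have hmemS : ∀ x ∈ S, |x| ≤ ε := fun x hx => hx
  have hsq1 : ∀ x ∈ S, x ^ 2 ≤ 1 := fun x hx =>
    (sq_le_one_iff_abs_le_one x).2 (le_trans (hmemS x hx) hε1)
  have hfin2 : ∫⁻ x in S, ENNReal.ofReal (x ^ 2) ∂ν < ⊤ := by
    calc ∫⁻ x in S, ENNReal.ofReal (x ^ 2) ∂ν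
        ≤ ∫⁻ x in S, ENNReal.ofReal (min (x ^ 2) 1) ∂ν := by
          refine setLIntegral_mono' hS (fun x hx => ?_)
          rw [min_eq_left (hsq1 x hx)]
      _ ≤ ∫⁻ x, ENNReal.ofReal (min (x ^ 2) 1) ∂ν := setLIntegral_le_lintegral _ _
      _ < ⊤ := hν.finiteMin
  have hint2 : IntegrableOn (fun x : ℝ => x ^ 2) S ν := by
    refine ⟨(measurable_id.pow_const 2).aestronglyMeasurable, ?_⟩
    rw [hasFiniteIntegral_iff_norm]
    have heq : (fun x : ℝ => ENNReal.ofReal ‖x ^ 2‖) = fun x : ℝ => ENNReal.ofReal (x ^ 2) :=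
      funext fun x => by rw [Real.norm_eq_abs, abs_of_nonneg (sq_nonneg x)]
    rw [heq]
    exact hfin2
  have hint3 : IntegrableOn (fun x : ℝ => |x| ^ 3) S ν := by
    refine Integrable.mono hint2 (measurable_id.abs.pow_const 3).aestronglyMeasurable ?_
    refine (ae_restrict_iff' hS).2 (ae_of_all _ (fun x hx => ?_))
    rw [Real.norm_eq_abs, Real.norm_eq_abs, abs_of_nonneg (by positivity : (0:ℝ) ≤ |x| ^ 3),
      abs_of_nonneg (sq_nonneg x)]
    calc |x| ^ 3 = |x| * |x| ^ 2 := by ring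
      _ ≤ 1 * |x| ^ 2 := mul_le_mul_of_nonneg_right (le_trans (hmemS x hx) hε1) (by positivity)
      _ = x ^ 2 := by rw [one_mul, sq_abs]
  set σ2 := ∫ x in S, x ^ 2 ∂ν with hσ2def
  set M := ∫ x in S, |x| ^ 3 ∂ν with hMdef
  have hσ2nn : 0 ≤ σ2 := setIntegral_nonneg hS fun x _ => sq_nonneg x
  have hMnn : 0 ≤ M := setIntegral_nonneg hS fun x _ => by positivity
  have hsig : sigmaFn ν ε ^ 2 = σ2 := by
    rw [sigmaFn, ← hSdef]; exact Real.sq_sqrt hσ2nn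
  set F : ℝ → ℝ → ℂ := fun u x => Complex.exp (Complex.I * ((u * x : ℝ) : ℂ)) - 1 -
    ((u * x : ℝ) : ℂ) * Complex.I with hFdef
  have hFcont : ∀ u : ℝ, Continuous (F u) := by
    intro u; rw [hFdef]; fun_prop
  have hpt : ∀ u x : ℝ, |u * x| ≤ 1 →
      ‖F u x + (((u * x) ^ 2 / 2 : ℝ) : ℂ)‖ ≤ 2 / 9 * |u * x| ^ 3 := by
    intro u x h
    have heq : F u x + (((u * x) ^ 2 / 2 : ℝ) : ℂ)
        = Complex.exp (Complex.I * ((u * x : ℝ) : ℂ)) - 1 - Complex.I * ((u * x : ℝ) : ℂ)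
          + (((u * x) ^ 2 / 2 : ℝ) : ℂ) := by rw [hFdef]; ring
    rw [heq]
    exact exp_taylor3 h
  have hFbd : ∀ u : ℝ, |u| ≤ 1 → ∀ x ∈ S, ‖F u x‖ ≤ x ^ 2 := by
    intro u hu x hx
    have hux : |u * x| ≤ 1 := by
      rw [abs_mul]
      exact mul_le_one₀ hu (abs_nonneg x) (le_trans (hmemS x hx) hε1)
    have h1 := hpt u x hux
    have h2 : ‖F u x‖ ≤ 2 / 9 * |u * x| ^ 3 + (u * x) ^ 2 / 2 := by
      have h3 : F u x = (F u x + (((u * x) ^ 2 / 2 : ℝ) : ℂ)) - (((u * x) ^ 2 / 2 : ℝ) : ℂ) := by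
        ring
      calc ‖F u x‖
          ≤ ‖F u x + (((u * x) ^ 2 / 2 : ℝ) : ℂ)‖
            + ‖(((u * x) ^ 2 / 2 : ℝ) : ℂ)‖ := by
            nth_rewrite 1 [h3]
            exact norm_sub_le _ _
        _ ≤ 2 / 9 * |u * x| ^ 3 + (u * x) ^ 2 / 2 := by
            rw [Complex.norm_real, Real.norm_eq_abs, abs_of_nonneg (by positivity : (0:ℝ) ≤ (u * x) ^ 2 / 2)]
            linarith
    have h4 : |u * x| ^ 3 ≤ (u * x) ^ 2 := by
      calc |u * x| ^ 3 ≤ |u * x| ^ 2 := pow_le_pow_of_le_one (abs_nonneg _) hux (by norm_num)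
        _ = (u * x) ^ 2 := sq_abs _
    have h5 : (u * x) ^ 2 ≤ x ^ 2 := by
      rw [mul_pow]
      exact mul_le_of_le_one_left (sq_nonneg x) ((sq_le_one_iff_abs_le_one u).2 hu)
    have h6 := sq_nonneg (u * x)
    linarith
  have hFint : ∀ u : ℝ, |u| ≤ 1 → IntegrableOn (F u) S ν := by
    intro u hu
    refine Integrable.mono hint2 ((hFcont u).measurable).aestronglyMeasurable ?_
    refine (ae_restrict_iff' hS).2 (ae_of_all _ fun x hx => ?_)
    rw [Real.norm_eq_abs, abs_of_nonneg (sq_nonneg x)]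
    exact hFbd u hu x hx
  have hGint : ∀ u : ℝ, IntegrableOn (fun x : ℝ => (((u * x) ^ 2 / 2 : ℝ) : ℂ)) S ν := by
    intro u
    have h1 : IntegrableOn (fun x : ℝ => (u * x) ^ 2 / 2) S ν := by
      have h2 := hint2.const_mul (u ^ 2 / 2)
      exact h2.congr (ae_of_all _ fun x => by ring)
    exact h1.ofReal
  have hGval : ∀ u : ℝ, ∫ x in S, ((u * x) ^ 2 / 2 : ℝ) ∂ν = u ^ 2 * σ2 / 2 := by
    intro u
    rw [show (fun x : ℝ => (u * x) ^ 2 / 2) = fun x : ℝ => (u ^ 2 / 2) * x ^ 2 from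
      funext fun x => by ring]
    rw [integral_const_mul]
    rw [hσ2def]; ring
  have hψ : ∀ u : ℝ, |u| ≤ 1 →
      ‖smallExponent ν ε u + ((u ^ 2 * σ2 / 2 : ℝ) : ℂ)‖ ≤ 2 / 9 * |u| ^ 3 * M := by
    intro u hu
    have hadd : smallExponent ν ε u + ((u ^ 2 * σ2 / 2 : ℝ) : ℂ)
        = ∫ x in S, (F u x + (((u * x) ^ 2 / 2 : ℝ) : ℂ)) ∂ν := by
      have hh1 : smallExponent ν ε u = ∫ x in S, F u x ∂ν := by rw [smallExponent, ← hSdef]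
      have hh2 : (∫ x in S, ((((u * x) ^ 2 / 2 : ℝ)) : ℂ) ∂ν) = ((u ^ 2 * σ2 / 2 : ℝ) : ℂ) := by
        have hio := integral_ofReal (𝕜 := ℂ) (f := fun x : ℝ => (u * x) ^ 2 / 2)
          (μ := ν.restrict S)
        rw [hGval u] at hio
        exact hio
      rw [integral_add (hFint u hu) (hGint u), hh1, hh2]
    rw [hadd]
    have hnorm : ‖∫ x in S, (F u x + (((u * x) ^ 2 / 2 : ℝ) : ℂ)) ∂ν‖
        ≤ ∫ x in S, ‖F u x + (((u * x) ^ 2 / 2 : ℝ) : ℂ)‖ ∂ν := norm_integral_le_integral_norm _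
    refine le_trans hnorm ?_
    have hmono : ∫ x in S, ‖F u x + (((u * x) ^ 2 / 2 : ℝ) : ℂ)‖ ∂ν
        ≤ ∫ x in S, 2 / 9 * |u| ^ 3 * |x| ^ 3 ∂ν := by
      refine setIntegral_mono_on ((hFint u hu).add (hGint u)).norm
        ((hint3.const_mul (2 / 9 * |u| ^ 3)).congr (ae_of_all _ fun x => by ring)) hS
        (fun x hx => ?_)
      have hux : |u * x| ≤ 1 := by
        rw [abs_mul]
        exact mul_le_one₀ hu (abs_nonneg x) (le_trans (hmemS x hx) hε1)
      refine le_trans (hpt u x hux) ?_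
      rw [abs_mul, mul_pow]
      ring_nf
      exact le_refl _
    refine le_trans hmono ?_
    rw [show (fun x : ℝ => 2 / 9 * |u| ^ 3 * |x| ^ 3) = fun x : ℝ => (2 / 9 * |u| ^ 3) * |x| ^ 3 from
      funext fun x => by ring, integral_const_mul]
  have hψre : ∀ u : ℝ, |u| ≤ 1 → (smallExponent ν ε u).re ≤ 0 := by
    intro u hu
    have h1 : (smallExponent ν ε u).re = ∫ x in S, (F u x).re ∂ν := by
      rw [show smallExponent ν ε u = ∫ x in S, F u x ∂ν from by rw [smallExponent, ← hSdef]]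
      exact (integral_re (hFint u hu)).symm
    have h2 : ∀ x : ℝ, (F u x).re = Real.cos (u * x) - 1 := by
      intro x
      rw [hFdef]
      simp [Complex.exp_re, Complex.sub_re, Complex.mul_re, Complex.mul_im, Complex.I_re,
        Complex.I_im, Complex.ofReal_re, Complex.ofReal_im, Complex.one_re, Real.exp_zero]
    rw [h1]
    simp_rw [h2]
    exact setIntegral_nonpos hS fun x _ => sub_nonpos.2 (Real.cos_le_one _)
  have hcos : ∀ u : ℝ, ∫ ω, Real.cos (u * R ω) ∂P
      = Real.exp (t * (smallExponent ν ε u).re) * Real.cos (t * (smallExponent ν ε u).im) := by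
    intro u
    have hmeas : Measurable (fun ω => Complex.exp (Complex.I * ((u * R ω : ℝ) : ℂ))) :=
      Complex.measurable_exp.comp ((Complex.measurable_ofReal.comp (hR.const_mul u)).const_mul
        Complex.I)
    have hint : Integrable (fun ω => Complex.exp (Complex.I * ((u * R ω : ℝ) : ℂ))) P := by
      refine Integrable.mono' (integrable_const 1) hmeas.aestronglyMeasurable
        (ae_of_all _ fun ω => ?_)
      rw [Complex.norm_exp]
      simp [Complex.mul_re]
    have h0 := integral_re (𝕜 := ℂ) hint
    rw [hchar u] at h0
    have h2 : (fun ω => RCLike.re (Complex.exp (Complex.I * ((u * R ω : ℝ) : ℂ))))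
        = fun ω => Real.cos (u * R ω) := by
      funext ω
      simp [RCLike.re_to_complex, Complex.exp_re, Complex.mul_re, Complex.mul_im, Complex.I_re,
        Complex.I_im, Complex.ofReal_re, Complex.ofReal_im, Real.exp_zero]
    rw [h2] at h0
    rw [h0, RCLike.re_to_complex, Complex.exp_re, Complex.re_ofReal_mul, Complex.im_ofReal_mul]
  have hE : ∀ u : ℝ, 0 < u → u ≤ 1 →
      1 - ∫ ω, Real.cos (u * R ω) ∂P ≤ t * ‖smallExponent ν ε u‖
        + (t * ‖smallExponent ν ε u‖) ^ 2 / 2 := by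
    intro u hu0 hu1
    have hu : |u| ≤ 1 := by rwa [abs_of_pos hu0]
    set ψ := smallExponent ν ε u with hψdef
    set A := ‖ψ‖ with hAdef
    have hA0 : 0 ≤ A := norm_nonneg ψ
    have hre : t * ψ.re ≤ 0 := mul_nonpos_of_nonneg_of_nonpos ht.le (hψre u hu)
    rw [hcos u]
    have h1 : Real.exp (t * ψ.re) ≤ 1 := Real.exp_le_one_iff.2 hre
    have h1' : 0 ≤ Real.exp (t * ψ.re) := (Real.exp_pos _).le
    have h2 : 1 - Real.exp (t * ψ.re) ≤ -(t * ψ.re) := by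
      have := Real.add_one_le_exp (t * ψ.re); linarith
    have h3 : 1 - Real.cos (t * ψ.im) ≤ (t * ψ.im) ^ 2 / 2 := by
      have := Real.one_sub_sq_div_two_le_cos (x := t * ψ.im); linarith
    have h4 : 0 ≤ 1 - Real.cos (t * ψ.im) := by
      have := Real.cos_le_one (t * ψ.im); linarith
    have h5 : Real.exp (t * ψ.re) * (1 - Real.cos (t * ψ.im)) ≤ 1 - Real.cos (t * ψ.im) :=
      mul_le_of_le_one_left h4 h1
    have h6 : -(t * ψ.re) ≤ t * A := by
      have ha := Complex.abs_re_le_norm ψ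
      have hb := neg_abs_le ψ.re
      nlinarith
    have h7 : (t * ψ.im) ^ 2 ≤ (t * A) ^ 2 := by
      have him : |ψ.im| ≤ A := Complex.abs_im_le_norm ψ
      have habs : |t * ψ.im| ≤ t * A := by
        rw [abs_mul, abs_of_pos ht]
        exact mul_le_mul_of_nonneg_left him ht.le
      calc (t * ψ.im) ^ 2 = |t * ψ.im| ^ 2 := (sq_abs _).symm
        _ ≤ (t * A) ^ 2 := pow_le_pow_left₀ (abs_nonneg _) habs 2
    nlinarith
  -- the sequence
  set un : ℕ → ℝ := fun n => 1 / (n + 1) with hundef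
  have hu0 : ∀ n, 0 < un n := fun n => by positivity
  have hu1 : ∀ n, un n ≤ 1 := fun n => by
    rw [hundef]
    rw [div_le_one (by positivity)]
    linarith [(Nat.cast_nonneg n : (0:ℝ) ≤ (n : ℝ))]
  have hulim : Tendsto un atTop (nhds 0) := tendsto_one_div_add_atTop_nhds_zero_nat
  set Bn : ℕ → ℝ := fun n => σ2 / 2 + 2 / 9 * un n * M with hBdef
  have hBnn : ∀ n, 0 ≤ Bn n := fun n =>
    add_nonneg (by linarith) (mul_nonneg (by positivity) hMnn)
  have hAle : ∀ n, ‖smallExponent ν ε (un n)‖ ≤ (un n) ^ 2 * Bn n := by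
    intro n
    have hu : |un n| ≤ 1 := by rw [abs_of_pos (hu0 n)]; exact hu1 n
    have h := hψ (un n) hu
    have habsw : ‖(((un n) ^ 2 * σ2 / 2 : ℝ) : ℂ)‖ = (un n) ^ 2 * σ2 / 2 := by
      rw [Complex.norm_real, Real.norm_eq_abs, abs_of_nonneg]
      have := sq_nonneg (un n); nlinarith
    have htri : ‖smallExponent ν ε (un n)‖
        ≤ ‖smallExponent ν ε (un n) + (((un n) ^ 2 * σ2 / 2 : ℝ) : ℂ)‖
          + ‖(((un n) ^ 2 * σ2 / 2 : ℝ) : ℂ)‖ := by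
      nth_rewrite 1 [show smallExponent ν ε (un n)
        = (smallExponent ν ε (un n) + (((un n) ^ 2 * σ2 / 2 : ℝ) : ℂ))
          - (((un n) ^ 2 * σ2 / 2 : ℝ) : ℂ) from by ring]
      exact norm_sub_le _ _
    have habsu : |un n| ^ 3 = (un n) ^ 3 := by rw [abs_of_pos (hu0 n)]
    rw [habsw] at htri
    rw [habsu] at h
    have hgoal : (un n) ^ 2 * Bn n = (un n) ^ 2 * σ2 / 2 + 2 / 9 * (un n) ^ 3 * M := by
      rw [hBdef]; ring
    calc ‖smallExponent ν ε (un n)‖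
        ≤ ‖smallExponent ν ε (un n) + (((un n) ^ 2 * σ2 / 2 : ℝ) : ℂ)‖
          + (un n) ^ 2 * σ2 / 2 := htri
      _ ≤ 2 / 9 * (un n) ^ 3 * M + (un n) ^ 2 * σ2 / 2 := by linarith
      _ = (un n) ^ 2 * Bn n := by rw [hgoal]; ring
  set dn : ℕ → ℝ := fun n => 2 * t * Bn n + t ^ 2 * (un n) ^ 2 * (Bn n) ^ 2 with hddef
  have hcosint : ∀ c : ℝ, Integrable (fun ω => Real.cos (c * R ω)) P := by
    intro c
    refine Integrable.mono' (integrable_const 1)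
      ((Real.measurable_cos.comp (hR.const_mul c)).aestronglyMeasurable)
      (ae_of_all _ fun ω => ?_)
    rw [Real.norm_eq_abs]
    exact Real.abs_cos_le_one _
  have hgval : ∀ n, ∫ ω, 2 * (1 - Real.cos (un n * R ω)) / (un n) ^ 2 ∂P
      = 2 * (1 - ∫ ω, Real.cos (un n * R ω) ∂P) / (un n) ^ 2 := by
    intro n
    rw [show (fun ω => 2 * (1 - Real.cos (un n * R ω)) / (un n) ^ 2)
      = fun ω => (2 / (un n) ^ 2) * (1 - Real.cos (un n * R ω)) from funext fun ω => by ring]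
    rw [integral_const_mul, integral_sub (integrable_const 1) (hcosint (un n)), integral_const]
    simp [measure_univ]
    ring
  have hgle : ∀ n, ∫ ω, 2 * (1 - Real.cos (un n * R ω)) / (un n) ^ 2 ∂P ≤ dn n := by
    intro n
    have hEn := hE (un n) (hu0 n) (hu1 n)
    have hA := hAle n
    have hA0 : 0 ≤ ‖smallExponent ν ε (un n)‖ :=
      norm_nonneg _
    have hup : (0:ℝ) < (un n) ^ 2 := by positivity
    rw [hgval n, div_le_iff₀ hup]
    set A := ‖smallExponent ν ε (un n)‖
    have h1 : t * A ≤ t * ((un n) ^ 2 * Bn n) := mul_le_mul_of_nonneg_left hA ht.le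
    have h2 : (t * A) ^ 2 ≤ (t * ((un n) ^ 2 * Bn n)) ^ 2 :=
      pow_le_pow_left₀ (mul_nonneg ht.le hA0) h1 2
    have h3 : dn n * (un n) ^ 2
        = 2 * (t * ((un n) ^ 2 * Bn n)) + (t * ((un n) ^ 2 * Bn n)) ^ 2 := by
      rw [hddef]; ring
    linarith
  have hdlim : Tendsto dn atTop (nhds (t * σ2)) := by
    have hcont : Continuous (fun y : ℝ =>
        2 * t * (σ2 / 2 + 2 / 9 * y * M) + t ^ 2 * y ^ 2 * (σ2 / 2 + 2 / 9 * y * M) ^ 2) := by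
      fun_prop
    have hcomp := (hcont.tendsto 0).comp hulim
    have heq : (fun y : ℝ =>
        2 * t * (σ2 / 2 + 2 / 9 * y * M) + t ^ 2 * y ^ 2 * (σ2 / 2 + 2 / 9 * y * M) ^ 2) ∘ un
        = dn := by
      funext n
      simp only [Function.comp_apply, hddef, hBdef]
    have h0 : 2 * t * (σ2 / 2 + 2 / 9 * (0:ℝ) * M)
        + t ^ 2 * (0:ℝ) ^ 2 * (σ2 / 2 + 2 / 9 * (0:ℝ) * M) ^ 2 = t * σ2 := by ring
    rw [heq, h0] at hcomp
    exact hcomp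
  have hgmeas : ∀ n, Measurable (fun ω => 2 * (1 - Real.cos (un n * R ω)) / (un n) ^ 2) :=
    fun n => ((measurable_const.sub (Real.measurable_cos.comp (hR.const_mul (un n)))).const_mul
      2).div_const _
  have hgnn : ∀ n ω, 0 ≤ 2 * (1 - Real.cos (un n * R ω)) / (un n) ^ 2 := by
    intro n ω
    have := Real.cos_le_one (un n * R ω)
    have h2 : (0:ℝ) ≤ 1 - Real.cos (un n * R ω) := by linarith
    positivity
  have hgint : ∀ n, Integrable (fun ω => 2 * (1 - Real.cos (un n * R ω)) / (un n) ^ 2) P := by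
    intro n
    refine Integrable.mono' (integrable_const (4 / (un n) ^ 2))
      (hgmeas n).aestronglyMeasurable (ae_of_all _ fun ω => ?_)
    rw [Real.norm_eq_abs, abs_div, abs_of_nonneg (sq_nonneg (un n))]
    gcongr
    have h1 := Real.cos_le_one (un n * R ω)
    have h2 := Real.neg_one_le_cos (un n * R ω)
    rw [abs_mul]
    rw [abs_of_nonneg (by linarith : (0:ℝ) ≤ 1 - Real.cos (un n * R ω))]
    norm_num
    linarith
  have hpoint : ∀ ω, Tendsto
      (fun n => ENNReal.ofReal (2 * (1 - Real.cos (un n * R ω)) / (un n) ^ 2)) atTop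
      (nhds (ENNReal.ofReal (R ω ^ 2))) := by
    intro ω
    refine (ENNReal.continuous_ofReal.tendsto _).comp ?_
    rw [← tendsto_sub_nhds_zero_iff]
    have h01 : Tendsto (fun n => un n * R ω) atTop (nhds 0) := by
      have := hulim.mul_const (R ω)
      rwa [zero_mul] at this
    have hball : ∀ᶠ y : ℝ in nhds 0, |y| ≤ 1 := by
      filter_upwards [Metric.ball_mem_nhds (0:ℝ) one_pos] with y hy
      rw [Metric.mem_ball, Real.dist_eq, sub_zero] at hy
      exact hy.le
    have hev := h01.eventually hball
    refine squeeze_zero_norm' (a := fun n => 5 / 48 * R ω ^ 4 * (un n) ^ 2) ?_ ?_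
    · filter_upwards [hev] with n hn
      have hcb := Real.cos_bound hn
      have hup : (0:ℝ) < (un n) ^ 2 := by positivity
      have heq : 2 * (1 - Real.cos (un n * R ω)) / (un n) ^ 2 - R ω ^ 2
          = -(2 * (Real.cos (un n * R ω) - (1 - (un n * R ω) ^ 2 / 2))) / (un n) ^ 2 := by
        rw [div_sub' hup.ne']
        ring
      have habs4 : |un n * R ω| ^ 4 = (un n * R ω) ^ 4 := by
        rw [← abs_pow, abs_of_nonneg (by positivity)]
      rw [Real.norm_eq_abs, heq, abs_div, abs_neg, abs_of_pos hup, div_le_iff₀ hup, abs_mul]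
      rw [show |(2:ℝ)| = 2 from by norm_num]
      have heq2 : 2 * (|un n * R ω| ^ 4 * (5 / 96))
          = 5 / 48 * R ω ^ 4 * (un n) ^ 2 * (un n) ^ 2 := by
        rw [habs4]; ring
      linarith
    · have h2 : Tendsto (fun n => (un n) ^ 2) atTop (nhds 0) := by
        have := hulim.pow 2
        simpa using this
      have := h2.const_mul (5 / 48 * R ω ^ 4)
      simpa using this
  calc ∫⁻ ω, ENNReal.ofReal (R ω ^ 2) ∂P
      = ∫⁻ ω, liminf
          (fun n => ENNReal.ofReal (2 * (1 - Real.cos (un n * R ω)) / (un n) ^ 2)) atTop ∂P :=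
        lintegral_congr fun ω => ((hpoint ω).liminf_eq).symm
    _ ≤ liminf
          (fun n => ∫⁻ ω, ENNReal.ofReal (2 * (1 - Real.cos (un n * R ω)) / (un n) ^ 2) ∂P)
          atTop :=
        lintegral_liminf_le fun n => (hgmeas n).ennreal_ofReal
    _ ≤ liminf (fun n => ENNReal.ofReal (dn n)) atTop := by
        refine Filter.liminf_le_liminf (Filter.Eventually.of_forall fun n => ?_)
        rw [← ofReal_integral_eq_lintegral_ofReal (hgint n) (ae_of_all _ fun ω => hgnn n ω)]
        exact ENNReal.ofReal_le_ofReal (hgle n)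
    _ = ENNReal.ofReal (t * σ2) := ((ENNReal.continuous_ofReal.tendsto _).comp hdlim).liminf_eq
    _ = ENNReal.ofReal (t * sigmaFn ν ε ^ 2) := by rw [hsig]

/-- Proposition 5, part 1: uniform bound for the cdf's when `b > 0`. -/
theorem cdf_bound_with_diffusion
    {Ω : Type*} [MeasurableSpace Ω] (P : Measure Ω) [IsProbabilityMeasure P]
    (γ b : ℝ) (hb0 : 0 ≤ b) (ν : Measure ℝ) (hν : IsLevyMeasure ν)
    (X : ℝ → Ω → ℝ) (Xe : ℝ → ℝ → Ω → ℝ)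
    (hX : IsLevyProcess P X)
    (hXchar : HasCharExponent P X (levyExponent γ b ν))
    (hXe : ∀ ε ∈ Set.Ioc (0:ℝ) 1, IsLevyProcess P (Xe ε))
    (hXechar : ∀ ε ∈ Set.Ioc (0:ℝ) 1, HasCharExponent P (Xe ε) (truncExponent γ b ν ε))
    (hRchar : ∀ ε ∈ Set.Ioc (0:ℝ) 1,
      HasCharExponent P (fun s ω => X s ω - Xe ε s ω) (smallExponent ν ε))
    (hIndep : ∀ ε ∈ Set.Ioc (0:ℝ) 1,
      IndepFun (fun ω => fun s : ℝ => Xe ε s ω) (fun ω => fun s : ℝ => X s ω - Xe ε s ω) P)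
    (hb : 0 < b)
    (B : ℝ → Ω → ℝ) (hB : IsStdBrownian P B)
    (t : ℝ) (ht : 0 < t)
    (hBindep : ∀ ε ∈ Set.Ioc (0:ℝ) 1,
      IndepFun (fun ω => b * B t ω)
        (fun ω => (Xe ε t ω - b * B t ω, X t ω - Xe ε t ω)) P) :
    ∀ ε ∈ Set.Ioc (0:ℝ) 1, ∀ x : ℝ,
      |(P {ω | x ≤ X t ω}).toReal - (P {ω | x ≤ Xe ε t ω}).toReal|
        ≤ sigmaFn ν ε / (Real.sqrt (2 * Real.pi) * b) := by
  intro ε hε x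
  have hσnn : 0 ≤ sigmaFn ν ε := Real.sqrt_nonneg _
  have hRHSnn : 0 ≤ sigmaFn ν ε / (Real.sqrt (2 * Real.pi) * b) := by
    apply div_nonneg hσnn
    positivity
  set Z : Ω → ℝ := fun ω => b * B t ω with hZdef
  set V : Ω → ℝ := fun ω => Xe ε t ω - b * B t ω with hVdef
  set Rv : Ω → ℝ := fun ω => X t ω - Xe ε t ω with hRdef
  have hZm : Measurable Z := (hB.meas t).const_mul b
  have hXm : Measurable (X t) := hX.meas t
  have hXem : Measurable (Xe ε t) := (hXe ε hε).meas t
  have hVm : Measurable V := hXem.sub hZm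
  have hRm : Measurable Rv := hXm.sub hXem
  -- the second moment bound for Rv
  have hchar' : ∀ u : ℝ, ∫ ω, Complex.exp (Complex.I * ((u * Rv ω : ℝ) : ℂ)) ∂P
      = Complex.exp ((t : ℂ) * smallExponent ν ε u) := fun u => hRchar ε hε t ht.le u
  have hmom := smallExp_moment P ν hν hε hRm ht hchar'
  -- case σ = 0
  rcases eq_or_lt_of_le hσnn with hσ0 | hσpos
  · -- then Rv = 0 a.e. and the two probabilities coincide
    have hz : ∫⁻ ω, ENNReal.ofReal (Rv ω ^ 2) ∂P = 0 := by
      refine le_antisymm ?_ zero_le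
      calc ∫⁻ ω, ENNReal.ofReal (Rv ω ^ 2) ∂P ≤ ENNReal.ofReal (t * sigmaFn ν ε ^ 2) := hmom
        _ = 0 := by rw [← hσ0]; simp
    have hae : ∀ᵐ ω ∂P, ENNReal.ofReal (Rv ω ^ 2) = 0 :=
      (lintegral_eq_zero_iff ((hRm.pow_const 2).ennreal_ofReal)).mp hz
    have haeR : ∀ᵐ ω ∂P, X t ω = Xe ε t ω := by
      filter_upwards [hae] with ω h
      have h2 : Rv ω ^ 2 ≤ 0 := ENNReal.ofReal_eq_zero.mp h
      have h3 : Rv ω = 0 := by nlinarith [sq_nonneg (Rv ω)]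
      have h4 : X t ω - Xe ε t ω = 0 := h3
      linarith
    have hsets : {ω | x ≤ X t ω} =ᵐ[P] {ω | x ≤ Xe ε t ω} := by
      refine Filter.eventuallyEq_set.2 ?_
      filter_upwards [haeR] with ω h
      simp only [Set.mem_setOf_eq, h]
    rw [measure_congr hsets, sub_self, abs_zero]
    exact hRHSnn
  -- main case σ > 0
  -- law of Z is Gaussian
  have hmapBt : P.map (B t) = gaussianReal 0 t.toNNReal := by
    have h1 := hB.gauss 0 t le_rfl ht.le
    have h2 : (fun ω => B t ω - B 0 ω) =ᵐ[P] B t := by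
      filter_upwards [hB.init] with ω h0
      rw [h0, sub_zero]
    rw [← Measure.map_congr h2, h1, sub_zero]
  set v : ℝ≥0 := Real.toNNReal (b ^ 2) * Real.toNNReal t with hvdef
  have hmk : (⟨b ^ 2, sq_nonneg b⟩ : ℝ≥0) = Real.toNNReal (b ^ 2) := by
    ext
    simp [Real.coe_toNNReal _ (sq_nonneg b)]
  have hmapZ : P.map Z = gaussianReal 0 v := by
    have h1 : Z = (fun y : ℝ => b * y) ∘ B t := rfl
    rw [h1, ← Measure.map_map (measurable_const_mul b) (hB.meas t), hmapBt]
    have h2 := gaussianReal_map_const_mul (μ := 0) (v := t.toNNReal) b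
    rw [mul_zero] at h2
    rw [h2, hvdef]
    congr 2
  have hv0 : v ≠ 0 := by
    rw [hvdef]
    refine mul_ne_zero ?_ ?_
    · intro h
      have h2 : b ^ 2 ≤ 0 := Real.toNNReal_eq_zero.mp h
      nlinarith
    · intro h
      exact absurd (Real.toNNReal_eq_zero.mp h) (not_le.2 ht)
  have hvcoe : (v : ℝ) = b ^ 2 * t := by
    rw [hvdef]
    push_cast
    rw [Real.coe_toNNReal _ (sq_nonneg b), Real.coe_toNNReal _ ht.le]
  -- the Gaussian survival function
  set G : ℝ → ℝ≥0∞ := fun y => gaussianReal 0 v (Set.Ici y) with hGdef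
  have hGmeas : Measurable G :=
    Antitone.measurable (fun y y' hyy' => measure_mono (Set.Ici_subset_Ici.2 hyy'))
  have hGle1 : ∀ y, G y ≤ 1 := fun y => prob_le_one
  have hGlt : ∀ y, G y < ⊤ := fun y => lt_of_le_of_lt (hGle1 y) (by norm_num)
  set g : ℝ → ℝ := fun y => (G y).toReal with hgdef
  have hgnn : ∀ y, 0 ≤ g y := fun y => ENNReal.toReal_nonneg
  have hgle1 : ∀ y, g y ≤ 1 := fun y => by
    rw [hgdef]
    calc (G y).toReal ≤ (1 : ℝ≥0∞).toReal :=
      ENNReal.toReal_mono (by norm_num) (hGle1 y)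
      _ = 1 := by simp
  have hgmeas : Measurable g := hGmeas.ennreal_toReal
  set K : ℝ := (Real.sqrt (2 * Real.pi * v))⁻¹ with hKdef
  have hKnn : 0 ≤ K := by rw [hKdef]; positivity
  have hgLip : ∀ a a' : ℝ, |g a - g a'| ≤ |a - a'| * K := by
    have key : ∀ a a' : ℝ, a ≤ a' → |g a - g a'| ≤ |a - a'| * K := by
      intro a a' h
      have h1 := gauss_surv_lip v hv0 h
      have h2 : g a' ≤ g a :=
        ENNReal.toReal_mono (ne_of_lt (hGlt a)) (measure_mono (Set.Ici_subset_Ici.2 h))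
      rw [abs_of_nonneg (sub_nonneg.2 h2), abs_sub_comm, abs_of_nonneg (by linarith)]
      exact h1
    intro a a'
    rcases le_total a a' with h | h
    · exact key a a' h
    · rw [abs_sub_comm, abs_sub_comm a a']
      exact key a' a h
  -- independence
  have hbind := hBindep ε hε
  have hindW : IndepFun Z (fun ω => V ω + Rv ω) P := by
    have h := hbind.comp measurable_id (measurable_fst.add measurable_snd)
    exact h
  have hindV : IndepFun Z V P := by
    have h := hbind.comp measurable_id measurable_fst
    exact h
  -- representations
  have hrep1 : P {ω | x ≤ X t ω} = ∫⁻ ω, G (x - (V ω + Rv ω)) ∂P := by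
    have hXeq : {ω | x ≤ X t ω} = {ω | x ≤ Z ω + (V ω + Rv ω)} := by
      ext ω
      simp only [Set.mem_setOf_eq, hZdef, hVdef, hRdef]
      constructor <;> intro h <;> linarith
    rw [hXeq, indep_rep P (W := fun ω => V ω + Rv ω) hZm (hVm.add hRm) hindW x, hmapZ]
  have hrep2 : P {ω | x ≤ Xe ε t ω} = ∫⁻ ω, G (x - V ω) ∂P := by
    have hXeq : {ω | x ≤ Xe ε t ω} = {ω | x ≤ Z ω + V ω} := by
      ext ω
      simp only [Set.mem_setOf_eq, hZdef, hVdef]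
      constructor <;> intro h <;> linarith
    rw [hXeq, indep_rep P hZm hVm hindV x, hmapZ]
  -- to real integrals
  have htoReal : ∀ (W : Ω → ℝ), Measurable W →
      (∫⁻ ω, G (x - W ω) ∂P).toReal = ∫ ω, g (x - W ω) ∂P := by
    intro W hWm
    rw [hgdef]
    exact (integral_toReal ((hGmeas.comp (measurable_const.sub hWm)).aemeasurable)
      (ae_of_all _ fun ω => hGlt _)).symm
  have hPX : (P {ω | x ≤ X t ω}).toReal = ∫ ω, g (x - (V ω + Rv ω)) ∂P := by
    rw [hrep1, htoReal (fun ω => V ω + Rv ω) (hVm.add hRm)]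
  have hPXe : (P {ω | x ≤ Xe ε t ω}).toReal = ∫ ω, g (x - V ω) ∂P := by
    rw [hrep2, htoReal _ hVm]
  -- integrability of the bounded integrands
  have hint_of : ∀ (W : Ω → ℝ), Measurable W → Integrable (fun ω => g (x - W ω)) P := by
    intro W hWm
    refine Integrable.mono' (integrable_const 1)
      ((hgmeas.comp (measurable_const.sub hWm)).aestronglyMeasurable)
      (ae_of_all _ fun ω => ?_)
    rw [Real.norm_eq_abs, abs_of_nonneg (hgnn _)]
    exact hgle1 _
  have hint1 : Integrable (fun ω => g (x - (V ω + Rv ω))) P := hint_of _ (hVm.add hRm)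
  have hint2 : Integrable (fun ω => g (x - V ω)) P := hint_of _ hVm
  -- second moment and first absolute moment of Rv
  have hR2int : Integrable (fun ω => Rv ω ^ 2) P := by
    refine ⟨(hRm.pow_const 2).aestronglyMeasurable, ?_⟩
    rw [hasFiniteIntegral_iff_norm]
    have heq : (fun ω => ENNReal.ofReal ‖Rv ω ^ 2‖) = fun ω => ENNReal.ofReal (Rv ω ^ 2) :=
      funext fun ω => by rw [Real.norm_eq_abs, abs_of_nonneg (sq_nonneg _)]
    rw [heq]
    exact lt_of_le_of_lt hmom ENNReal.ofReal_lt_top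
  have hER2 : ∫ ω, Rv ω ^ 2 ∂P ≤ t * sigmaFn ν ε ^ 2 := by
    have h1 : ∫ ω, Rv ω ^ 2 ∂P = (∫⁻ ω, ENNReal.ofReal (Rv ω ^ 2) ∂P).toReal :=
      integral_eq_lintegral_of_nonneg_ae (ae_of_all _ fun ω => sq_nonneg _)
        (hRm.pow_const 2).aestronglyMeasurable
    rw [h1]
    calc (∫⁻ ω, ENNReal.ofReal (Rv ω ^ 2) ∂P).toReal
        ≤ (ENNReal.ofReal (t * sigmaFn ν ε ^ 2)).toReal :=
          ENNReal.toReal_mono ENNReal.ofReal_ne_top hmom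
      _ = t * sigmaFn ν ε ^ 2 :=
          ENNReal.toReal_ofReal (mul_nonneg ht.le (sq_nonneg _))
  set c : ℝ := sigmaFn ν ε * Real.sqrt t with hcdef
  have hc0 : 0 < c := mul_pos hσpos (Real.sqrt_pos.2 ht)
  have hc2 : c ^ 2 = sigmaFn ν ε ^ 2 * t := by
    rw [hcdef, mul_pow, Real.sq_sqrt ht.le]
  have hptw : ∀ ω, |Rv ω| ≤ Rv ω ^ 2 / (2 * c) + c / 2 := by
    intro ω
    have h1 := sq_nonneg (|Rv ω| - c)
    have h2 : |Rv ω| ^ 2 = Rv ω ^ 2 := sq_abs _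
    rw [div_add_div _ _ (by positivity) (by norm_num : (2:ℝ) ≠ 0), le_div_iff₀ (by positivity)]
    nlinarith
  have hbnd_int : Integrable (fun ω => Rv ω ^ 2 / (2 * c) + c / 2) P :=
    (hR2int.div_const _).add (integrable_const _)
  have habs_int : Integrable (fun ω => |Rv ω|) P := by
    refine Integrable.mono' hbnd_int hRm.abs.aestronglyMeasurable (ae_of_all _ fun ω => ?_)
    rw [Real.norm_eq_abs, abs_abs]
    exact hptw ω
  have hERabs : ∫ ω, |Rv ω| ∂P ≤ c := by
    calc ∫ ω, |Rv ω| ∂P ≤ ∫ ω, (Rv ω ^ 2 / (2 * c) + c / 2) ∂P :=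
          integral_mono habs_int hbnd_int hptw
      _ = (∫ ω, Rv ω ^ 2 ∂P) / (2 * c) + c / 2 := by
          rw [integral_add (hR2int.div_const _) (integrable_const _), integral_div,
            integral_const]
          simp [measure_univ]
      _ ≤ (t * sigmaFn ν ε ^ 2) / (2 * c) + c / 2 := by
          gcongr
      _ = c := by
          rw [div_add_div _ _ (by positivity : (2:ℝ) * c ≠ 0) (by norm_num : (2:ℝ) ≠ 0)]
          rw [div_eq_iff (by positivity : (2:ℝ) * c * 2 ≠ 0)]
          nlinarith [hc2]
  -- final chain
  rw [hPX, hPXe, ← integral_sub hint1 hint2]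
  have hchain : |∫ ω, (g (x - (V ω + Rv ω)) - g (x - V ω)) ∂P| ≤ c * K := by
    calc |∫ ω, (g (x - (V ω + Rv ω)) - g (x - V ω)) ∂P|
        ≤ ∫ ω, |g (x - (V ω + Rv ω)) - g (x - V ω)| ∂P := by
          have h := norm_integral_le_integral_norm
            (μ := P) (fun ω => g (x - (V ω + Rv ω)) - g (x - V ω))
          simpa [Real.norm_eq_abs] using h
      _ ≤ ∫ ω, |Rv ω| * K ∂P := by
          refine integral_mono (hint1.sub hint2).abs (habs_int.mul_const K)
            (fun ω => ?_)
          have h1 := hgLip (x - (V ω + Rv ω)) (x - V ω)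
          have h2 : |x - (V ω + Rv ω) - (x - V ω)| = |Rv ω| := by
            rw [show x - (V ω + Rv ω) - (x - V ω) = -Rv ω from by ring, abs_neg]
          rw [h2] at h1
          exact h1
      _ = (∫ ω, |Rv ω| ∂P) * K := integral_mul_const _ _
      _ ≤ c * K := mul_le_mul_of_nonneg_right hERabs hKnn
  refine le_trans hchain (le_of_eq ?_)
  have hsqrtv : Real.sqrt (2 * Real.pi * v) = Real.sqrt (2 * Real.pi) * b * Real.sqrt t := by
    rw [hvcoe, show 2 * Real.pi * (b ^ 2 * t) = (2 * Real.pi) * (b ^ 2 * t) from by ring,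
      Real.sqrt_mul (by positivity) _, Real.sqrt_mul (sq_nonneg b) _,
      Real.sqrt_sq hb0]
    ring
  rw [hKdef, hsqrtv, hcdef]
  have hsqrt2pi : (0:ℝ) < Real.sqrt (2 * Real.pi) := Real.sqrt_pos.2 (by positivity)
  have hsqrtt : (0:ℝ) < Real.sqrt t := Real.sqrt_pos.2 ht
  field_simp

end LevyApprox
end
end
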